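/- arXiv:1504.03744 — 4 statements merged into one kernel-verified Lean document; each statement's English description precedes it below -/
import Mathlib

section
/- Let r > 0 and let B_1, B_2 be two closed balls of radius r in the Euclidean plane ℝ² whose centers are at distance d apart, with 0 ≤ d ≤ 2r. Then the Lebesgue measure (area) of B_1 ∩ B_2 equals 2r²·arccos(d/(2r)) − (d/2)·√(4r² − d²). -/
open MeasureTheory Metric

lemma lensF_hasDerivAt (r x : ℝ) (hr : 0 < r) (hx1 : -r < x) (hx2 : x < r) :
    HasDerivAt (fun t => (t * Real.sqrt (r^2 - t^2) + r^2 * Real.arcsin (t/r)) / 2)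
      (Real.sqrt (r^2 - x^2)) x := by
  have hpos : 0 < r^2 - x^2 := by nlinarith
  set s := Real.sqrt (r^2 - x^2) with hs
  have hs0 : 0 < s := Real.sqrt_pos.mpr hpos
  have hssq : s^2 = r^2 - x^2 := Real.sq_sqrt hpos.le
  have hinner : HasDerivAt (fun t : ℝ => r^2 - t^2) (-(2*x)) x := by
    simpa using (hasDerivAt_pow 2 x).const_sub (r^2)
  have h1 : HasDerivAt (fun t => Real.sqrt (r^2 - t^2)) (-(2*x) / (2 * s)) x := by
    have := (Real.hasDerivAt_sqrt hpos.ne').comp x hinner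
    simpa [div_eq_mul_inv, mul_comm, Function.comp_def] using this
  have harg : HasDerivAt (fun t : ℝ => t / r) (1/r) x := by
    simpa [one_div] using (hasDerivAt_id x).div_const r
  have hne1 : x / r ≠ -1 := by
    intro h; rw [div_eq_iff hr.ne'] at h; nlinarith
  have hne2 : x / r ≠ 1 := by
    intro h; rw [div_eq_iff hr.ne'] at h; nlinarith
  have h2 : HasDerivAt (fun t => Real.arcsin (t/r))
      (1 / Real.sqrt (1 - (x/r)^2) * (1/r)) x :=
    by have := (Real.hasDerivAt_arcsin hne1 hne2).comp x harg; exact this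
  have hsqrt1 : Real.sqrt (1 - (x/r)^2) = s / r := by
    have : 1 - (x/r)^2 = (r^2 - x^2) / r^2 := by field_simp
    rw [this, Real.sqrt_div hpos.le, Real.sqrt_sq hr.le]
  have hF : HasDerivAt (fun t => (t * Real.sqrt (r^2 - t^2) + r^2 * Real.arcsin (t/r)) / 2)
      ((1 * s + x * (-(2*x) / (2 * s)) + r^2 * (1 / Real.sqrt (1 - (x/r)^2) * (1/r))) / 2) x :=
    (((hasDerivAt_id x).mul h1).add (h2.const_mul (r^2))).div_const 2
  convert hF using 1
  rw [hsqrt1]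
  field_simp
  linear_combination hssq

lemma lens_integral_sqrt (r a : ℝ) (hr : 0 < r) (ha0 : 0 ≤ a) (har : a ≤ r) :
    ∫ x in a..r, Real.sqrt (r^2 - x^2)
      = (r^2 * (Real.pi/2) - (a * Real.sqrt (r^2 - a^2) + r^2 * Real.arcsin (a/r))) / 2 := by
  set F : ℝ → ℝ := fun t => (t * Real.sqrt (r^2 - t^2) + r^2 * Real.arcsin (t/r)) / 2 with hF
  have hcont : ContinuousOn F (Set.Icc a r) := by
    apply Continuous.continuousOn
    have h1 : Continuous fun t : ℝ => t * Real.sqrt (r^2 - t^2) := by fun_prop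
    have h2 : Continuous fun t : ℝ => r^2 * Real.arcsin (t/r) :=
      continuous_const.mul (Real.continuous_arcsin.comp (continuous_id.div_const r))
    exact (h1.add h2).div_const 2
  have hderiv : ∀ x ∈ Set.Ioo a r,
      HasDerivWithinAt F (Real.sqrt (r^2 - x^2)) (Set.Ioi x) x := by
    intro x hx
    exact (lensF_hasDerivAt r x hr (by nlinarith [hx.1, hx.2]) hx.2).hasDerivWithinAt
  have hint : IntervalIntegrable (fun x => Real.sqrt (r^2 - x^2)) volume a r := by
    apply Continuous.intervalIntegrable; fun_prop
  have := intervalIntegral.integral_eq_sub_of_hasDeriv_right_of_le har hcont hderiv hint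
  rw [this, hF]
  simp only
  rw [show r^2 - r^2 = 0 by ring, Real.sqrt_zero, div_self hr.ne', Real.arcsin_one]
  ring

lemma lens_slice_volume (r d x : ℝ) :
    volume {y : ℝ | x^2 + y^2 ≤ r^2 ∧ (x-d)^2 + y^2 ≤ r^2}
      = ENNReal.ofReal (2 * Real.sqrt (min (r^2 - x^2) (r^2 - (x-d)^2))) := by
  set m := min (r^2 - x^2) (r^2 - (x-d)^2) with hm
  have hset : {y : ℝ | x^2 + y^2 ≤ r^2 ∧ (x-d)^2 + y^2 ≤ r^2} = {y : ℝ | y^2 ≤ m} := by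
    ext y; simp only [Set.mem_setOf_eq, hm, le_min_iff]; constructor <;> intro h <;>
      exact ⟨by linarith [h.1], by linarith [h.2]⟩
  rw [hset]
  by_cases hm0 : 0 ≤ m
  · have h2 : {y : ℝ | y^2 ≤ m} = Set.Icc (-Real.sqrt m) (Real.sqrt m) := by
      ext y
      simp only [Set.mem_setOf_eq, Set.mem_Icc, ← abs_le]
      constructor
      · intro h; exact Real.abs_le_sqrt h
      · intro h
        have := Real.sq_sqrt hm0
        nlinarith [abs_nonneg y, sq_abs y]
    rw [h2, Real.volume_Icc]
    congr 1; ring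
  · push_neg at hm0
    have h2 : {y : ℝ | y^2 ≤ m} = ∅ := by
      ext y; simp only [Set.mem_setOf_eq, Set.mem_empty_iff_false, iff_false]
      nlinarith [sq_nonneg y]
    rw [h2, Real.sqrt_eq_zero_of_nonpos hm0.le]
    simp

section
variable (r d : ℝ)

noncomputable def lensf (x : ℝ) : ℝ := 2 * Real.sqrt (min (r^2 - x^2) (r^2 - (x-d)^2))

lemma lensf_cont : Continuous (lensf r d) := by
  unfold lensf; fun_prop

lemma lensf_nonneg (x : ℝ) : 0 ≤ lensf r d x := by
  unfold lensf; positivity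

lemma lensf_support (hr : 0 < r) (hd0 : 0 ≤ d) (hd : d ≤ 2*r) (x : ℝ)
    (hx : x ∉ Set.Icc (d - r) r) : lensf r d x = 0 := by
  simp only [Set.mem_Icc, not_and_or, not_le] at hx
  unfold lensf
  rcases hx with h | h
  · have : r^2 - (x-d)^2 < 0 := by nlinarith
    rw [min_eq_right (by nlinarith), Real.sqrt_eq_zero_of_nonpos this.le]; ring
  · have : r^2 - x^2 < 0 := by nlinarith
    rw [min_eq_left (by nlinarith), Real.sqrt_eq_zero_of_nonpos this.le]; ring

lemma lensf_integrable (hr : 0 < r) (hd0 : 0 ≤ d) (hd : d ≤ 2*r) : Integrable (lensf r d) := by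
  apply (lensf_cont r d).integrable_of_hasCompactSupport
  exact HasCompactSupport.intro isCompact_Icc (lensf_support r d hr hd0 hd)

lemma lensf_symm (x : ℝ) : lensf r d (d - x) = lensf r d x := by
  unfold lensf
  rw [min_comm]
  ring_nf

lemma lensf_integral (hr : 0 < r) (hd0 : 0 ≤ d) (hd : d ≤ 2*r) :
    ∫ x, lensf r d x
      = 2 * r^2 * Real.arccos (d/(2*r)) - (d/2) * Real.sqrt (4*r^2 - d^2) := by
  have hdr : d - r ≤ d/2 := by linarith
  have hd2r : d/2 ≤ r := by linarith
  have hii : ∀ a b : ℝ, IntervalIntegrable (lensf r d) volume a b :=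
    fun a b => (lensf_cont r d).intervalIntegrable a b
  have h0 : ∫ x, lensf r d x = ∫ x in (d-r)..r, lensf r d x := by
    rw [intervalIntegral.integral_of_le (by linarith), ← integral_Icc_eq_integral_Ioc]
    exact (setIntegral_eq_integral_of_forall_compl_eq_zero (lensf_support r d hr hd0 hd)).symm
  have hsplit : ∫ x in (d-r)..r, lensf r d x
      = (∫ x in (d-r)..(d/2), lensf r d x) + ∫ x in (d/2)..r, lensf r d x :=
    (intervalIntegral.integral_add_adjacent_intervals (hii _ _) (hii _ _)).symm
  have hleft : ∫ x in (d-r)..(d/2), lensf r d x = ∫ x in (d/2)..r, lensf r d x := by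
    have := intervalIntegral.integral_comp_sub_left (a := d - r) (b := d/2) (lensf r d) d
    rw [show d - d/2 = d/2 by ring, show d - (d - r) = r by ring] at this
    rw [← this]
    apply intervalIntegral.integral_congr
    intro x _
    exact (lensf_symm r d x).symm
  have hright : ∫ x in (d/2)..r, lensf r d x
      = 2 * ∫ x in (d/2)..r, Real.sqrt (r^2 - x^2) := by
    rw [← intervalIntegral.integral_const_mul]
    apply intervalIntegral.integral_congr
    intro x hx
    rw [Set.uIcc_of_le hd2r, Set.mem_Icc] at hx
    unfold lensf
    rw [min_eq_left (by nlinarith [hx.1])]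
  rw [h0, hsplit, hleft, hright, lens_integral_sqrt r (d/2) hr (by linarith) hd2r,
    Real.arccos_eq_pi_div_two_sub_arcsin]
  have h1 : d/2/r = d/(2*r) := by ring
  have h2 : Real.sqrt (4*r^2 - d^2) = 2 * Real.sqrt (r^2 - (d/2)^2) := by
    rw [show (4:ℝ)*r^2 - d^2 = 2^2 * (r^2 - (d/2)^2) by ring, Real.sqrt_mul (by norm_num),
      Real.sqrt_sq (by norm_num : (0:ℝ) ≤ 2)]
  rw [h1, h2]
  ring

end

lemma lens_area_prod (r d : ℝ) (hr : 0 < r) (hd0 : 0 ≤ d) (hd : d ≤ 2*r) :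
    volume {p : ℝ × ℝ | p.1^2 + p.2^2 ≤ r^2 ∧ (p.1-d)^2 + p.2^2 ≤ r^2}
      = ENNReal.ofReal
        (2 * r^2 * Real.arccos (d/(2*r)) - (d/2) * Real.sqrt (4*r^2 - d^2)) := by
  have hTmeas : MeasurableSet {p : ℝ × ℝ | p.1^2 + p.2^2 ≤ r^2 ∧ (p.1-d)^2 + p.2^2 ≤ r^2} := by
    have h1 : Continuous fun p : ℝ × ℝ => p.1^2 + p.2^2 := by fun_prop
    have h2 : Continuous fun p : ℝ × ℝ => (p.1-d)^2 + p.2^2 := by fun_prop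
    exact ((isClosed_le h1 continuous_const).inter (isClosed_le h2 continuous_const)).measurableSet
  rw [show (volume : Measure (ℝ × ℝ)) = Measure.prod volume volume from Measure.volume_eq_prod ℝ ℝ,
    Measure.prod_apply hTmeas]
  have hpre : ∀ x : ℝ, (Prod.mk x ⁻¹' {p : ℝ × ℝ | p.1^2 + p.2^2 ≤ r^2 ∧ (p.1-d)^2 + p.2^2 ≤ r^2})
      = {y : ℝ | x^2 + y^2 ≤ r^2 ∧ (x-d)^2 + y^2 ≤ r^2} := fun x => rfl
  calc ∫⁻ x, volume (Prod.mk x ⁻¹' {p : ℝ × ℝ | p.1^2 + p.2^2 ≤ r^2 ∧ (p.1-d)^2 + p.2^2 ≤ r^2})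
      = ∫⁻ x, ENNReal.ofReal (lensf r d x) := by
        congr 1; funext x; rw [hpre x, lens_slice_volume r d x]; rfl
    _ = ENNReal.ofReal (∫ x, lensf r d x) :=
        (ofReal_integral_eq_lintegral_ofReal (lensf_integrable r d hr hd0 hd)
          (Filter.Eventually.of_forall (lensf_nonneg r d))).symm
    _ = ENNReal.ofReal (2 * r^2 * Real.arccos (d/(2*r)) - (d/2) * Real.sqrt (4*r^2 - d^2)) := by
        rw [lensf_integral r d hr hd0 hd]

lemma lens_target_nonneg (r d : ℝ) (hr : 0 < r) (hd0 : 0 ≤ d) (hd : d ≤ 2*r) :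
    0 ≤ 2 * r^2 * Real.arccos (d/(2*r)) - (d/2) * Real.sqrt (4*r^2 - d^2) := by
  rw [← lensf_integral r d hr hd0 hd]
  exact integral_nonneg (lensf_nonneg r d)

lemma lens_area_euclidean (r d : ℝ) (hr : 0 < r) (hd0 : 0 ≤ d) (hd : d ≤ 2*r) :
    volume (closedBall (0 : EuclideanSpace ℝ (Fin 2)) r
        ∩ closedBall (EuclideanSpace.single (0 : Fin 2) d) r)
      = ENNReal.ofReal
        (2 * r^2 * Real.arccos (d/(2*r)) - (d/2) * Real.sqrt (4*r^2 - d^2)) := by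
  set T : Set (ℝ × ℝ) := {p : ℝ × ℝ | p.1^2 + p.2^2 ≤ r^2 ∧ (p.1-d)^2 + p.2^2 ≤ r^2} with hT
  have hTmeas : MeasurableSet T := by
    have h1 : Continuous fun p : ℝ × ℝ => p.1^2 + p.2^2 := by fun_prop
    have h2 : Continuous fun p : ℝ × ℝ => (p.1-d)^2 + p.2^2 := by fun_prop
    exact ((isClosed_le h1 continuous_const).inter (isClosed_le h2 continuous_const)).measurableSet
  have hψ : MeasurePreserving
      (fun x : EuclideanSpace ℝ (Fin 2) =>
        (MeasurableEquiv.finTwoArrow ((MeasurableEquiv.toLp 2 (Fin 2 → ℝ)).symm x) : ℝ × ℝ)) :=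
    (volume_preserving_finTwoArrow ℝ).comp
      (EuclideanSpace.volume_preserving_symm_measurableEquiv_toLp (Fin 2))
  have hset : closedBall (0 : EuclideanSpace ℝ (Fin 2)) r
        ∩ closedBall (EuclideanSpace.single (0 : Fin 2) d) r
      = (fun x : EuclideanSpace ℝ (Fin 2) =>
        (MeasurableEquiv.finTwoArrow ((MeasurableEquiv.toLp 2 (Fin 2 → ℝ)).symm x) : ℝ × ℝ)) ⁻¹' T := by
    ext x
    simp only [Set.mem_inter_iff, mem_closedBall, Set.mem_preimage, hT, Set.mem_setOf_eq,
      MeasurableEquiv.finTwoArrow_apply]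
    have hx0 : ((MeasurableEquiv.toLp 2 (Fin 2 → ℝ)).symm x : Fin 2 → ℝ) 0 = x 0 := rfl
    have hx1 : ((MeasurableEquiv.toLp 2 (Fin 2 → ℝ)).symm x : Fin 2 → ℝ) 1 = x 1 := rfl
    rw [hx0, hx1]
    have hd1 : dist x 0 = Real.sqrt ((x 0)^2 + (x 1)^2) := by
      rw [EuclideanSpace.dist_eq, Fin.sum_univ_two]
      norm_num
    have hd2 : dist x (EuclideanSpace.single (0 : Fin 2) d)
        = Real.sqrt ((x 0 - d)^2 + (x 1)^2) := by
      rw [EuclideanSpace.dist_eq, Fin.sum_univ_two]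
      simp [EuclideanSpace.single_apply, Real.dist_eq, sq_abs]
    rw [hd1, hd2, Real.sqrt_le_iff, Real.sqrt_le_iff]
    constructor
    · rintro ⟨⟨-, h1⟩, ⟨-, h2⟩⟩; exact ⟨h1, h2⟩
    · rintro ⟨h1, h2⟩; exact ⟨⟨hr.le, h1⟩, ⟨hr.le, h2⟩⟩
  rw [hset, hψ.measure_preimage hTmeas.nullMeasurableSet]
  exact lens_area_prod r d hr hd0 hd


/-- The area (two-dimensional Lebesgue measure) of the intersection of two closed balls of
radius `r` in the Euclidean plane whose centers are at distance `d`, with `0 ≤ d ≤ 2r`,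
equals `2r²·arccos(d/(2r)) − (d/2)·√(4r² − d²)`. -/
theorem volume_inter_closedBall_eq_lens_area
    (r d : ℝ) (hr : 0 < r) (hd0 : 0 ≤ d) (hd : d ≤ 2 * r)
    (c₁ c₂ : EuclideanSpace ℝ (Fin 2)) (hdist : dist c₁ c₂ = d) :
    (volume (closedBall c₁ r ∩ closedBall c₂ r)).toReal =
      2 * r ^ 2 * Real.arccos (d / (2 * r)) - (d / 2) * Real.sqrt (4 * r ^ 2 - d ^ 2) := by
  set q : EuclideanSpace ℝ (Fin 2) := EuclideanSpace.single (0 : Fin 2) d with hq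
  set v : EuclideanSpace ℝ (Fin 2) := c₂ - c₁ with hv
  have hnv : ‖v‖ = ‖q‖ := by
    rw [hq, EuclideanSpace.norm_single, Real.norm_eq_abs, abs_of_nonneg hd0, hv, ← dist_eq_norm, dist_comm, hdist]
  set L : EuclideanSpace ℝ (Fin 2) ≃ₗᵢ[ℝ] EuclideanSpace ℝ (Fin 2) :=
    Submodule.reflection (ℝ ∙ (v - q))ᗮ with hL
  have hLv : L v = q := Submodule.reflection_sub hnv
  have hφ : MeasurePreserving (fun x : EuclideanSpace ℝ (Fin 2) => L (x - c₁)) volume volume :=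
    L.measurePreserving.comp (measurePreserving_sub_right volume c₁)
  have hset : closedBall c₁ r ∩ closedBall c₂ r
      = (fun x : EuclideanSpace ℝ (Fin 2) => L (x - c₁)) ⁻¹'
        (closedBall (0 : EuclideanSpace ℝ (Fin 2)) r ∩ closedBall q r) := by
    ext x
    simp only [Set.mem_inter_iff, mem_closedBall, Set.mem_preimage]
    have h1 : dist (L (x - c₁)) 0 = dist x c₁ := by
      rw [dist_zero_right, L.norm_map, ← dist_eq_norm]
    have h2 : dist (L (x - c₁)) q = dist x c₂ := by
      rw [← hLv, L.dist_map, dist_eq_norm, hv, sub_sub_sub_cancel_right, ← dist_eq_norm]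
    rw [h1, h2]
  rw [hset, hφ.measure_preimage]
  · rw [lens_area_euclidean r d hr hd0 hd,
      ENNReal.toReal_ofReal (lens_target_nonneg r d hr hd0 hd)]
  · exact (measurableSet_closedBall.inter measurableSet_closedBall).nullMeasurableSet
end

section
/- Let r > 0, l ≥ 1, and let c_i = (i·r, 0) ∈ ℝ² for i = 1, ..., l (collinear centers, consecutive centers at distance exactly r). Then the Lebesgue measure (area) of the union ⋃_{i=1}^{l} B(c_i, r) of the closed balls of radius r equals l·π·r² − 2(l−1)·r²·(π/3 − √3/4). -/
open MeasureTheory Metric Real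

noncomputable def F (r x : ℝ) : ℝ := (x * Real.sqrt (r^2 - x^2) + r^2 * Real.arcsin (x/r)) / 2

lemma sqrt_int (r : ℝ) (hr : 0 < r) (a b : ℝ) (ha : -r ≤ a) (hab : a ≤ b) (hb : b ≤ r) :
    ∫ x in a..b, Real.sqrt (r^2 - x^2) = F r b - F r a := by
  apply intervalIntegral.integral_eq_sub_of_hasDeriv_right_of_le hab
  · apply Continuous.continuousOn
    unfold F
    continuity
  · intro x hx
    have hx1 : -r < x := lt_of_lt_of_le (lt_of_le_of_lt ha hx.1) le_rfl
    have hx2 : x < r := lt_of_lt_of_le hx.2 hb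
    have hu : 0 < r^2 - x^2 := by nlinarith
    have hsu : 0 < Real.sqrt (r^2 - x^2) := Real.sqrt_pos.2 hu
    have h1 : HasDerivAt (fun x : ℝ => r^2 - x^2) (-(2*x)) x := by
      simpa using ((hasDerivAt_pow 2 x).const_sub (r^2))
    have h2 : HasDerivAt (fun x : ℝ => Real.sqrt (r^2 - x^2))
        (1 / (2 * Real.sqrt (r^2 - x^2)) * (-(2*x))) x :=
      (Real.hasDerivAt_sqrt hu.ne').comp x h1
    have h3 : HasDerivAt (fun x : ℝ => x * Real.sqrt (r^2 - x^2))
        (1 * Real.sqrt (r^2 - x^2) + x * (1 / (2 * Real.sqrt (r^2 - x^2)) * (-(2*x)))) x :=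
      (hasDerivAt_id x).mul h2
    have hd1 : x / r ≠ -1 := by
      intro h
      have : x = -r := by field_simp at h; linarith
      linarith
    have hd2 : x / r ≠ 1 := by
      intro h
      have : x = r := by field_simp at h; exact h
      linarith
    have h4 : HasDerivAt (fun x : ℝ => Real.arcsin (x / r))
        (1 / Real.sqrt (1 - (x/r)^2) * (1/r)) x :=
      by have := (Real.hasDerivAt_arcsin hd1 hd2).comp x ((hasDerivAt_id x).div_const r); exact this
    have h5 : HasDerivAt (F r)
        ((1 * Real.sqrt (r^2 - x^2) + x * (1 / (2 * Real.sqrt (r^2 - x^2)) * (-(2*x)))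
          + r^2 * (1 / Real.sqrt (1 - (x/r)^2) * (1/r))) / 2) x := by
      unfold F
      exact ((h3.add (h4.const_mul (r^2))).div_const 2)
    have key : Real.sqrt (1 - (x/r)^2) = Real.sqrt (r^2 - x^2) / r := by
      rw [show 1 - (x/r)^2 = (r^2 - x^2)/r^2 by field_simp, Real.sqrt_div hu.le,
        Real.sqrt_sq hr.le]
    have : (1 * Real.sqrt (r^2 - x^2) + x * (1 / (2 * Real.sqrt (r^2 - x^2)) * (-(2*x)))
          + r^2 * (1 / Real.sqrt (1 - (x/r)^2) * (1/r))) / 2 = Real.sqrt (r^2 - x^2) := by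
      rw [key]
      have hs2 : Real.sqrt (r^2 - x^2) * Real.sqrt (r^2 - x^2) = r^2 - x^2 :=
        Real.mul_self_sqrt hu.le
      field_simp
      linear_combination (-1) * hs2
    rw [this] at h5
    exact h5.hasDerivWithinAt
  · apply Continuous.intervalIntegrable
    continuity

lemma F_at_r (r : ℝ) (hr : 0 < r) : F r r = π * r^2 / 4 := by
  unfold F
  rw [show r^2 - r^2 = 0 by ring, Real.sqrt_zero, div_self hr.ne', Real.arcsin_one]
  ring

lemma F_at_neg_r (r : ℝ) (hr : 0 < r) : F r (-r) = -(π * r^2 / 4) := by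
  unfold F
  rw [show r^2 - (-r)^2 = 0 by ring, Real.sqrt_zero, neg_div, div_self hr.ne',
    Real.arcsin_neg_one]
  ring

lemma arcsin_half : Real.arcsin (1/2) = π / 6 := by
  rw [show (1:ℝ)/2 = Real.sin (π/6) by rw [Real.sin_pi_div_six]]
  exact Real.arcsin_sin (by linarith [Real.pi_pos]) (by linarith [Real.pi_pos])

lemma F_at_half (r : ℝ) (hr : 0 < r) : F r (r/2) = Real.sqrt 3 * r^2 / 8 + π * r^2 / 12 := by
  unfold F
  have h1 : r^2 - (r/2)^2 = (Real.sqrt 3 * r / 2)^2 := by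
    have h3 : Real.sqrt 3 ^ 2 = 3 := Real.sq_sqrt (by norm_num)
    linear_combination (-(r^2/4)) * h3
  rw [h1, Real.sqrt_sq (by positivity), show r/2/r = 1/2 by field_simp, arcsin_half]
  ring

lemma F_at_neg_half (r : ℝ) (hr : 0 < r) :
    F r (-(r/2)) = -(Real.sqrt 3 * r^2 / 8 + π * r^2 / 12) := by
  unfold F
  have h1 : r^2 - (-(r/2))^2 = (Real.sqrt 3 * r / 2)^2 := by
    have h3 : Real.sqrt 3 ^ 2 = 3 := Real.sq_sqrt (by norm_num)
    linear_combination (-(r^2/4)) * h3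
  rw [h1, Real.sqrt_sq (by positivity), show -(r/2)/r = -(1/2) by field_simp,
    Real.arcsin_neg, arcsin_half]
  ring

lemma vol_sq_le (m : ℝ) : volume {y : ℝ | y^2 ≤ m} = ENNReal.ofReal (2 * Real.sqrt m) := by
  rcases lt_or_ge m 0 with hm | hm
  · have he : {y : ℝ | y^2 ≤ m} = ∅ := by
      ext y
      simp only [Set.mem_setOf_eq, Set.mem_empty_iff_false, iff_false, not_le]
      exact lt_of_lt_of_le hm (sq_nonneg y)
    rw [he, measure_empty, Real.sqrt_eq_zero'.mpr hm.le, mul_zero, ENNReal.ofReal_zero]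
  · have he : {y : ℝ | y^2 ≤ m} = Set.Icc (-Real.sqrt m) (Real.sqrt m) := by
      ext y
      simp only [Set.mem_setOf_eq, Set.mem_Icc, ← abs_le, ← Real.sqrt_sq_eq_abs,
        Real.sqrt_le_sqrt_iff hm]
    rw [he, Real.volume_Icc]
    congr 1
    ring

lemma vol_disc (a r : ℝ) (hr : 0 < r) :
    volume {p : ℝ × ℝ | (p.1 - a)^2 + p.2^2 ≤ r^2} = ENNReal.ofReal (π * r^2) := by
  have hS : MeasurableSet {p : ℝ × ℝ | (p.1 - a)^2 + p.2^2 ≤ r^2} :=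
    (isClosed_le (by continuity) continuous_const).measurableSet
  rw [MeasureTheory.Measure.volume_eq_prod, Measure.prod_apply hS]
  have hslice : ∀ x : ℝ, volume (Prod.mk x ⁻¹' {p : ℝ × ℝ | (p.1 - a)^2 + p.2^2 ≤ r^2})
      = ENNReal.ofReal (2 * Real.sqrt (r^2 - (x-a)^2)) := by
    intro x
    have he : Prod.mk x ⁻¹' {p : ℝ × ℝ | (p.1 - a)^2 + p.2^2 ≤ r^2}
        = {y : ℝ | y^2 ≤ r^2 - (x-a)^2} := by
      ext y
      simp only [Set.mem_preimage, Set.mem_setOf_eq]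
      constructor <;> intro h <;> linarith
    rw [he, vol_sq_le]
  rw [lintegral_congr hslice]
  have hf0 : ∀ x : ℝ, 0 ≤ 2 * Real.sqrt (r^2 - (x-a)^2) := fun x => by positivity
  have hcont : Continuous (fun x : ℝ => 2 * Real.sqrt (r^2 - (x-a)^2)) := by continuity
  have hzero : ∀ x : ℝ, x ∉ Set.Ioc (a - r) (a + r) → 2 * Real.sqrt (r^2 - (x-a)^2) = 0 := by
    intro x hx
    simp only [Set.mem_Ioc, not_and_or, not_lt, not_le] at hx
    have h0 : r^2 - (x-a)^2 ≤ 0 := by rcases hx with h | h <;> nlinarith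
    rw [Real.sqrt_eq_zero'.mpr h0, mul_zero]
  have hsupp : Function.support (fun x : ℝ => 2 * Real.sqrt (r^2 - (x-a)^2))
      ⊆ Set.Ioc (a - r) (a + r) := by
    intro x hx
    by_contra hmem
    exact hx (hzero x hmem)
  have hint : Integrable (fun x : ℝ => 2 * Real.sqrt (r^2 - (x-a)^2)) :=
    hcont.integrable_of_hasCompactSupport
      (HasCompactSupport.intro (isCompact_Icc (a := a - r) (b := a + r))
        (fun x hx => hzero x (fun hmem => hx (Set.Ioc_subset_Icc_self hmem))))
  rw [← ofReal_integral_eq_lintegral_ofReal hint (Filter.Eventually.of_forall hf0)]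
  congr 1
  rw [← intervalIntegral.integral_eq_integral_of_support_subset hsupp]
  have hcs := intervalIntegral.integral_comp_sub_right
    (fun u : ℝ => 2 * Real.sqrt (r^2 - u^2)) a (a := a - r) (b := a + r)
  rw [show (∫ x in (a-r)..(a+r), 2 * Real.sqrt (r^2 - (x-a)^2))
      = ∫ x in (a-r)..(a+r), (fun u : ℝ => 2 * Real.sqrt (r^2 - u^2)) (x - a) from rfl,
    hcs, show a - r - a = -r by ring, show a + r - a = r by ring,
    intervalIntegral.integral_const_mul,
    sqrt_int r hr (-r) r le_rfl (by linarith) le_rfl, F_at_r r hr, F_at_neg_r r hr]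
  ring

lemma vol_lens (a r : ℝ) (hr : 0 < r) :
    volume {p : ℝ × ℝ | (p.1 - a)^2 + p.2^2 ≤ r^2 ∧ (p.1 - (a+r))^2 + p.2^2 ≤ r^2}
      = ENNReal.ofReal (2 * r^2 * (π/3 - Real.sqrt 3 / 4)) := by
  have hS : MeasurableSet {p : ℝ × ℝ | (p.1 - a)^2 + p.2^2 ≤ r^2 ∧ (p.1 - (a+r))^2 + p.2^2 ≤ r^2} := by
    have he : {p : ℝ × ℝ | (p.1 - a)^2 + p.2^2 ≤ r^2 ∧ (p.1 - (a+r))^2 + p.2^2 ≤ r^2}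
        = {p : ℝ × ℝ | (p.1 - a)^2 + p.2^2 ≤ r^2} ∩ {p : ℝ × ℝ | (p.1 - (a+r))^2 + p.2^2 ≤ r^2} :=
      rfl
    rw [he]
    exact ((isClosed_le (by continuity) continuous_const).inter
      (isClosed_le (by continuity) continuous_const)).measurableSet
  set S := {p : ℝ × ℝ | (p.1 - a)^2 + p.2^2 ≤ r^2 ∧ (p.1 - (a+r))^2 + p.2^2 ≤ r^2} with hSdef
  set f := fun x : ℝ => 2 * Real.sqrt (min (r^2 - (x-a)^2) (r^2 - (x-(a+r))^2)) with hfdef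
  rw [MeasureTheory.Measure.volume_eq_prod, Measure.prod_apply hS]
  have hslice : ∀ x : ℝ, volume (Prod.mk x ⁻¹' S) = ENNReal.ofReal (f x) := by
    intro x
    have he : Prod.mk x ⁻¹' S = {y : ℝ | y^2 ≤ min (r^2 - (x-a)^2) (r^2 - (x-(a+r))^2)} := by
      ext y
      simp only [hSdef, Set.mem_preimage, Set.mem_setOf_eq, le_min_iff]
      constructor <;> rintro ⟨h1, h2⟩ <;> constructor <;> linarith
    rw [he, vol_sq_le]
  rw [lintegral_congr hslice]
  have hf0 : ∀ x : ℝ, 0 ≤ f x := fun x => by positivity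
  have hcont : Continuous f := by
    apply Continuous.mul continuous_const
    apply Real.continuous_sqrt.comp
    exact Continuous.min (by continuity) (by continuity)
  have hzero : ∀ x : ℝ, x ∉ Set.Ioc a (a + r) → f x = 0 := by
    intro x hx
    simp only [Set.mem_Ioc, not_and_or, not_lt, not_le] at hx
    have h0 : min (r^2 - (x-a)^2) (r^2 - (x-(a+r))^2) ≤ 0 := by
      rcases hx with h | h
      · exact le_trans (min_le_right _ _) (by nlinarith)
      · exact le_trans (min_le_left _ _) (by nlinarith)
    rw [hfdef]
    simp only [Real.sqrt_eq_zero'.mpr h0, mul_zero]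
  have hsupp : Function.support f ⊆ Set.Ioc a (a + r) :=
    fun x hx => by by_contra hmem; exact hx (hzero x hmem)
  have hint : Integrable f :=
    hcont.integrable_of_hasCompactSupport
      (HasCompactSupport.intro (isCompact_Icc (a := a) (b := a + r))
        (fun x hx => hzero x (fun hmem => hx (Set.Ioc_subset_Icc_self hmem))))
  rw [← ofReal_integral_eq_lintegral_ofReal hint (Filter.Eventually.of_forall hf0)]
  congr 1
  rw [← intervalIntegral.integral_eq_integral_of_support_subset hsupp]
  have hsplit : (∫ x in a..(a + r/2), f x) + (∫ x in (a + r/2)..(a+r), f x)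
      = ∫ x in a..(a+r), f x :=
    intervalIntegral.integral_add_adjacent_intervals
      (hcont.intervalIntegrable _ _) (hcont.intervalIntegrable _ _)
  rw [← hsplit]
  have hp1 : (∫ x in a..(a + r/2), f x)
      = ∫ x in a..(a + r/2), (fun u : ℝ => 2 * Real.sqrt (r^2 - u^2)) (x - (a+r)) := by
    apply intervalIntegral.integral_congr
    intro x hx
    rw [Set.uIcc_of_le (by linarith)] at hx
    have h1 : x - a ≤ r/2 := by have := hx.2; linarith
    have h2 : a ≤ x := hx.1
    simp only [hfdef]
    rw [min_eq_right (by nlinarith)]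
  have hp2 : (∫ x in (a + r/2)..(a+r), f x)
      = ∫ x in (a + r/2)..(a+r), (fun u : ℝ => 2 * Real.sqrt (r^2 - u^2)) (x - a) := by
    apply intervalIntegral.integral_congr
    intro x hx
    rw [Set.uIcc_of_le (by linarith)] at hx
    have h1 : r/2 ≤ x - a := by have := hx.1; linarith
    have h2 : x ≤ a + r := hx.2
    simp only [hfdef]
    rw [min_eq_left (by nlinarith)]
  rw [hp1, hp2,
    intervalIntegral.integral_comp_sub_right (fun u : ℝ => 2 * Real.sqrt (r^2 - u^2)) (a+r),
    intervalIntegral.integral_comp_sub_right (fun u : ℝ => 2 * Real.sqrt (r^2 - u^2)) a,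
    show a - (a+r) = -r by ring, show a + r/2 - (a+r) = -(r/2) by ring,
    show a + r/2 - a = r/2 by ring, show a + r - a = r by ring,
    intervalIntegral.integral_const_mul, intervalIntegral.integral_const_mul,
    sqrt_int r hr (-r) (-(r/2)) le_rfl (by linarith) (by linarith),
    sqrt_int r hr (r/2) r (by linarith) (by linarith) le_rfl,
    F_at_r r hr, F_at_neg_r r hr, F_at_half r hr, F_at_neg_half r hr]
  ring

/-- The area of the union of `l` closed balls of radius `r` whose centers are collinear,
equally spaced, with consecutive centers at distance exactly `r`
(`cᵢ = (i·r, 0)` for `i = 1, …, l`), equals `l·π·r² − 2(l−1)·r²·(π/3 − √3/4)`. -/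
theorem volume_union_collinear_closedBalls
    (r : ℝ) (hr : 0 < r) (l : ℕ) (hl : 1 ≤ l)
    (c : ℕ → EuclideanSpace ℝ (Fin 2))
    (hc : ∀ i, c i = (WithLp.equiv 2 (Fin 2 → ℝ)).symm ![(i : ℝ) * r, 0]) :
    (volume (⋃ i ∈ Finset.Icc 1 l, closedBall (c i) r)).toReal =
      (l : ℝ) * π * r ^ 2 - 2 * ((l : ℝ) - 1) * r ^ 2 * (π / 3 - Real.sqrt 3 / 4) := by
  have hsqrt4 : Real.sqrt 4 = 2 := by
    rw [show (4:ℝ) = 2^2 by norm_num]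
    exact Real.sqrt_sq (by norm_num)
  have hsqrt3 : Real.sqrt 3 ≤ 2 := by
    rw [← hsqrt4]
    exact Real.sqrt_le_sqrt (by norm_num)
  have hpi3 := Real.pi_gt_three
  have hlens0 : 0 ≤ 2*r^2*(π/3 - Real.sqrt 3/4) := by nlinarith [sq_nonneg r]
  have hlens_le : 2*r^2*(π/3 - Real.sqrt 3/4) ≤ π*r^2 := by
    nlinarith [Real.sqrt_nonneg 3, sq_nonneg r]
  have hA0 : ∀ n : ℕ, 1 ≤ n →
      0 ≤ (n:ℝ)*(π*r^2) - ((n:ℝ)-1)*(2*r^2*(π/3 - Real.sqrt 3/4)) := by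
    intro n hn
    have h1 : (1:ℝ) ≤ (n:ℝ) := by exact_mod_cast hn
    nlinarith [mul_nonneg (by linarith : (0:ℝ) ≤ (n:ℝ)-1)
      (by linarith : (0:ℝ) ≤ π*r^2 - 2*r^2*(π/3 - Real.sqrt 3/4))]
  set D : ℕ → Set (ℝ × ℝ) := fun i => {p : ℝ × ℝ | (p.1 - (i:ℝ)*r)^2 + p.2^2 ≤ r^2} with hDdef
  have hD : ∀ i, MeasurableSet (D i) := fun i =>
    (isClosed_le (((continuous_fst.sub continuous_const).pow 2).add
      (continuous_snd.pow 2)) continuous_const).measurableSet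
  have hDvol : ∀ i, volume (D i) = ENNReal.ofReal (π*r^2) := fun i => vol_disc _ r hr
  have hDlens : ∀ i : ℕ, volume (D i ∩ D (i+1))
      = ENNReal.ofReal (2*r^2*(π/3 - Real.sqrt 3/4)) := by
    intro i
    have hcast : ((i+1:ℕ):ℝ)*r = (i:ℝ)*r + r := by push_cast; ring
    have he : D i ∩ D (i+1) = {p : ℝ × ℝ | (p.1 - (i:ℝ)*r)^2 + p.2^2 ≤ r^2
        ∧ (p.1 - ((i:ℝ)*r + r))^2 + p.2^2 ≤ r^2} := by
      ext p
      simp only [hDdef, Set.mem_inter_iff, Set.mem_setOf_eq, hcast]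
    rw [he, vol_lens ((i:ℝ)*r) r hr]
  have hkey : ∀ n : ℕ, 1 ≤ n → volume (⋃ i ∈ Finset.Icc 1 n, D i)
      = ENNReal.ofReal ((n:ℝ)*(π*r^2) - ((n:ℝ)-1)*(2*r^2*(π/3 - Real.sqrt 3/4))) := by
    intro n hn
    induction n with
    | zero => omega
    | succ m ih =>
      rcases eq_or_lt_of_le hn with h1 | h1
      · have hm0 : m = 0 := by omega
        subst hm0
        have he : (⋃ i ∈ Finset.Icc 1 1, D i) = D 1 := by
          rw [Finset.Icc_self, Finset.set_biUnion_singleton]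
        rw [he, hDvol]
        norm_num
      · have hm : 1 ≤ m := by omega
        have ihm := ih hm
        have hins : Finset.Icc 1 (m+1) = insert (m+1) (Finset.Icc 1 m) :=
          (Finset.insert_Icc_right_eq_Icc_add_one (by omega)).symm
        rw [hins, Finset.set_biUnion_insert]
        set U := ⋃ i ∈ Finset.Icc 1 m, D i with hUdef
        have hUm : MeasurableSet U :=
          MeasurableSet.biUnion (Finset.Icc 1 m).countable_toSet (fun i _ => hD i)
        have hinter : volume (D (m+1) ∩ U)
            = ENNReal.ofReal (2*r^2*(π/3 - Real.sqrt 3/4)) := by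
          apply le_antisymm
          · have hsub : D (m+1) ∩ U ⊆ (D m ∩ D (m+1)) ∪ {((m:ℝ)*r, (0:ℝ))} := by
              rintro p ⟨hp1, hp2⟩
              simp only [hUdef, Set.mem_iUnion] at hp2
              obtain ⟨i, hi, hpi⟩ := hp2
              simp only [Finset.mem_Icc] at hi
              rcases eq_or_lt_of_le hi.2 with he | hlt
              · subst he
                exact Or.inl ⟨hpi, hp1⟩
              · right
                have hi1 : (i:ℝ) + 1 ≤ (m:ℝ) := by exact_mod_cast hlt
                simp only [hDdef, Set.mem_setOf_eq] at hp1 hpi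
                push_cast at hp1
                have hx1 : p.1 ≤ ((i:ℝ)+1)*r := by
                  nlinarith [sq_nonneg p.2, sq_nonneg (p.1 - (i:ℝ)*r - r)]
                have hx2 : (m:ℝ)*r ≤ p.1 := by
                  nlinarith [sq_nonneg p.2, sq_nonneg (p.1 - ((m:ℝ)+1)*r + r)]
                have hxx : p.1 = (m:ℝ)*r := by
                  apply le_antisymm _ hx2
                  calc p.1 ≤ ((i:ℝ)+1)*r := hx1
                    _ ≤ (m:ℝ)*r := by nlinarith
                have hy : p.2 = 0 := by
                  have h2 : p.2^2 ≤ 0 := by nlinarith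
                  have := le_antisymm h2 (sq_nonneg p.2)
                  exact (pow_eq_zero_iff (two_ne_zero)).mp this
                simp only [Set.mem_singleton_iff]
                exact Prod.ext hxx hy
            have hpt : volume ({((m:ℝ)*r, (0:ℝ))} : Set (ℝ × ℝ)) = 0 := by
              rw [show ({((m:ℝ)*r, (0:ℝ))} : Set (ℝ × ℝ))
                  = ({(m:ℝ)*r} : Set ℝ) ×ˢ ({(0:ℝ)} : Set ℝ) from
                    (Set.singleton_prod_singleton).symm,
                MeasureTheory.Measure.volume_eq_prod, Measure.prod_prod,
                Real.volume_singleton]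
              simp
            calc volume (D (m+1) ∩ U)
                ≤ volume ((D m ∩ D (m+1)) ∪ {((m:ℝ)*r, (0:ℝ))}) := measure_mono hsub
              _ ≤ volume (D m ∩ D (m+1)) + volume ({((m:ℝ)*r, (0:ℝ))} : Set (ℝ × ℝ)) :=
                  measure_union_le _ _
              _ = ENNReal.ofReal (2*r^2*(π/3 - Real.sqrt 3/4)) := by
                  rw [hDlens m, hpt, add_zero]
          · refine le_trans (le_of_eq (hDlens m).symm) (measure_mono ?_)
            rintro p ⟨h1', h2'⟩
            refine ⟨h2', ?_⟩
            simp only [hUdef, Set.mem_iUnion]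
            exact ⟨m, Finset.mem_Icc.mpr ⟨hm, le_rfl⟩, h1'⟩
        have hsum := measure_union_add_inter' (μ := volume) (hD (m+1)) U
        rw [hinter, hDvol, ihm] at hsum
        have hre : π*r^2 + ((m:ℝ)*(π*r^2) - ((m:ℝ)-1)*(2*r^2*(π/3 - Real.sqrt 3/4)))
            = (((m+1:ℕ):ℝ)*(π*r^2) - (((m+1:ℕ):ℝ)-1)*(2*r^2*(π/3 - Real.sqrt 3/4)))
              + 2*r^2*(π/3 - Real.sqrt 3/4) := by push_cast; ring
        rw [← ENNReal.ofReal_add (by positivity) (hA0 m hm), hre,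
          ENNReal.ofReal_add (hA0 (m+1) (by omega)) hlens0] at hsum
        exact WithTop.add_right_cancel ENNReal.ofReal_ne_top hsum
  set φ : EuclideanSpace ℝ (Fin 2) ≃ᵐ ℝ × ℝ :=
    (MeasurableEquiv.toLp 2 (Fin 2 → ℝ)).symm.trans MeasurableEquiv.finTwoArrow with hφdef
  have mp : MeasurePreserving φ :=
    (volume_preserving_finTwoArrow ℝ).comp
      (EuclideanSpace.volume_preserving_symm_measurableEquiv_toLp (Fin 2))
  have hball : ∀ i : ℕ, closedBall (c i) r = φ ⁻¹' (D i) := by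
    intro i
    ext x
    simp only [mem_closedBall, Set.mem_preimage, hDdef, Set.mem_setOf_eq]
    have hphi1 : (φ x).1 = x 0 := rfl
    have hphi2 : (φ x).2 = x 1 := rfl
    rw [hphi1, hphi2, EuclideanSpace.dist_eq, hc i]
    simp only [WithLp.equiv_symm_apply, PiLp.toLp_apply, Fin.sum_univ_two, Matrix.cons_val_zero,
      Matrix.cons_val_one, Matrix.head_cons]
    rw [Real.dist_eq, Real.dist_eq, sq_abs, sq_abs, Real.sqrt_le_left hr.le, sub_zero]
  have hunion : (⋃ i ∈ Finset.Icc 1 l, closedBall (c i) r)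
      = φ ⁻¹' (⋃ i ∈ Finset.Icc 1 l, D i) := by
    simp only [hball, Set.preimage_iUnion]
  have hmeas : MeasurableSet (⋃ i ∈ Finset.Icc 1 l, D i) :=
    Finset.measurableSet_biUnion _ (fun i _ => hD i)
  rw [hunion, mp.measure_preimage hmeas.nullMeasurableSet, hkey l hl,
    ENNReal.toReal_ofReal (hA0 l hl)]
  ring
end

section
/- Let r > 0, l ≥ 1, and let c_1, ..., c_l ∈ ℝ² be any points such that ‖c_{i+1} − c_i‖ ≤ r for all i = 1, ..., l−1. Then the Lebesgue measure (area) of ⋃_{i=1}^{l} B(c_i, r) is at most l·π·r² − 2(l−1)·r²·(π/3 − √3/4). -/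
open MeasureTheory Metric Real
open scoped ENNReal

local notation "E2" => EuclideanSpace ℝ (Fin 2)

lemma integral_sqrt_half : ∫ x in (1/2:ℝ)..1, Real.sqrt (1 - x^2) = π/6 - Real.sqrt 3/8 := by
  calc ∫ x in (1/2:ℝ)..1, Real.sqrt (1 - x^2)
      = ∫ x in Real.sin (π/6)..Real.sin (π/2), Real.sqrt (1 - x^2) := by
        rw [Real.sin_pi_div_six, Real.sin_pi_div_two]
    _ = ∫ x in (π/6)..(π/2), Real.sqrt (1 - Real.sin x^2) * Real.cos x :=
        (intervalIntegral.integral_comp_mul_deriv (fun x _ => Real.hasDerivAt_sin x) Real.continuousOn_cos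
          (by fun_prop)).symm
    _ = ∫ x in (π/6)..(π/2), Real.cos x ^ 2 := by
        refine intervalIntegral.integral_congr_ae (MeasureTheory.ae_of_all _ fun x h => ?_)
        rw [Set.uIoc_of_le (by linarith [Real.pi_pos] : (π/6:ℝ) ≤ π/2), Set.mem_Ioc] at h
        rw [← Real.cos_eq_sqrt_one_sub_sin_sq (by linarith [Real.pi_pos]) h.2, pow_two]
    _ = π/6 - Real.sqrt 3/8 := by
        rw [integral_cos_sq, Real.cos_pi_div_two, Real.sin_pi_div_six, Real.cos_pi_div_six]
        ring

lemma lens_prod (r : ℝ) (hr : 0 < r) :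
    ENNReal.ofReal (2 * (π/3 - Real.sqrt 3/4) * r^2) ≤
      volume {p : ℝ × ℝ | p.1^2 + p.2^2 ≤ r^2 ∧ (p.1 - r)^2 + p.2^2 ≤ r^2} := by
  set h : ℝ → ℝ := fun x => min (Real.sqrt (r^2 - x^2)) (Real.sqrt (r^2 - (x - r)^2)) with hh
  have hcont : Continuous h := by fun_prop
  have hnn : ∀ x, 0 ≤ h x := fun x => le_min (Real.sqrt_nonneg _) (Real.sqrt_nonneg _)
  have hint : IntegrableOn h (Set.Ioc 0 r) volume :=
    hcont.integrableOn_Ioc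
  have hint' : IntegrableOn (fun x => -h x) (Set.Ioc 0 r) volume := hint.neg
  have hsub : regionBetween (fun x => -h x) h (Set.Ioc 0 r) ⊆
      {p : ℝ × ℝ | p.1^2 + p.2^2 ≤ r^2 ∧ (p.1 - r)^2 + p.2^2 ≤ r^2} := by
    rintro ⟨x, y⟩ ⟨hx, hy⟩
    simp only [Set.mem_Ioc] at hx
    simp only [Set.mem_Ioo] at hy
    have hyabs : |y| < h x := abs_lt.mpr ⟨hy.1.trans_le' le_rfl |>.trans_le le_rfl, hy.2⟩
    have hy2 : y^2 < (h x)^2 := by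
      have := sq_lt_sq' (by linarith [hy.1]) hy.2
      simpa using this
    have h1 : (h x)^2 ≤ r^2 - x^2 := by
      have : h x ≤ Real.sqrt (r^2 - x^2) := min_le_left _ _
      calc (h x)^2 ≤ (Real.sqrt (r^2 - x^2))^2 := by
            exact pow_le_pow_left₀ (hnn x) this 2
        _ ≤ r^2 - x^2 := by
            rw [Real.sq_sqrt (by nlinarith [hx.1, hx.2] : (0:ℝ) ≤ r^2 - x^2)]
    have h2 : (h x)^2 ≤ r^2 - (x - r)^2 := by
      have : h x ≤ Real.sqrt (r^2 - (x - r)^2) := min_le_right _ _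
      calc (h x)^2 ≤ (Real.sqrt (r^2 - (x - r)^2))^2 := pow_le_pow_left₀ (hnn x) this 2
        _ ≤ r^2 - (x - r)^2 := by
            rw [Real.sq_sqrt (by nlinarith [hx.1, hx.2] : (0:ℝ) ≤ r^2 - (x - r)^2)]
    constructor <;> [nlinarith; nlinarith]
  have hvol : volume.prod volume (regionBetween (fun x => -h x) h (Set.Ioc 0 r)) =
      ENNReal.ofReal (∫ x in Set.Ioc 0 r, (h - fun x => -h x) x) :=
    volume_regionBetween_eq_integral hint' hint measurableSet_Ioc
      (fun x _ => by simpa using by linarith [hnn x])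
  -- compute the integral
  have key : ∫ x in Set.Ioc 0 r, (h - fun x => -h x) x = 2 * (π/3 - Real.sqrt 3/4) * r^2 := by
    have e0 : (fun x => (h - fun x => -h x) x) = fun x => 2 * h x := by
      funext x; simp; ring
    rw [e0, ← intervalIntegral.integral_of_le hr.le]
    have hsplit : ∫ x in (0:ℝ)..r, 2 * h x =
        (∫ x in (0:ℝ)..(r/2), 2 * h x) + ∫ x in (r/2)..r, 2 * h x :=
      (intervalIntegral.integral_add_adjacent_intervals
        ((hcont.const_smul (2:ℝ)).intervalIntegrable _ _)
        ((hcont.const_smul (2:ℝ)).intervalIntegrable _ _)).symm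
    have hleft : ∫ x in (0:ℝ)..(r/2), 2 * h x
        = ∫ x in (0:ℝ)..(r/2), 2 * Real.sqrt (r^2 - (r - x)^2) := by
      refine intervalIntegral.integral_congr fun x hx => ?_
      rw [Set.uIcc_of_le (by linarith), Set.mem_Icc] at hx
      have : h x = Real.sqrt (r^2 - (x - r)^2) := by
        apply min_eq_right
        apply Real.sqrt_le_sqrt
        nlinarith [hx.1, hx.2]
      rw [this]
      congr 2
      ring
    have hright : ∫ x in (r/2)..r, 2 * h x = ∫ x in (r/2)..r, 2 * Real.sqrt (r^2 - x^2) := by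
      refine intervalIntegral.integral_congr fun x hx => ?_
      rw [Set.uIcc_of_le (by linarith), Set.mem_Icc] at hx
      have : h x = Real.sqrt (r^2 - x^2) := by
        apply min_eq_left
        apply Real.sqrt_le_sqrt
        nlinarith [hx.1, hx.2]
      rw [this]
    have hsubst : ∫ x in (0:ℝ)..(r/2), 2 * Real.sqrt (r^2 - (r - x)^2)
        = ∫ x in (r/2)..r, 2 * Real.sqrt (r^2 - x^2) := by
      have h2 := intervalIntegral.integral_comp_sub_left
        (a := (0:ℝ)) (b := r/2) (fun x => 2 * Real.sqrt (r^2 - x^2)) r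
      rw [sub_zero, show r - r/2 = r/2 by ring] at h2
      exact h2
    have hscale : ∫ x in (r/2)..r, Real.sqrt (r^2 - x^2) = r^2 * (π/6 - Real.sqrt 3/8) := by
      have hc := intervalIntegral.integral_comp_mul_left
        (a := (1/2:ℝ)) (b := 1) (fun x => Real.sqrt (r^2 - x^2)) (ne_of_gt hr)
      have hval : (fun s : ℝ => Real.sqrt (r^2 - (r*s)^2)) = fun s => r * Real.sqrt (1 - s^2) := by
        funext s
        rw [show r^2 - (r*s)^2 = r^2 * (1 - s^2) by ring, Real.sqrt_mul (by positivity),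
          Real.sqrt_sq hr.le]
      rw [hval, intervalIntegral.integral_const_mul, integral_sqrt_half] at hc
      calc ∫ x in (r/2)..r, Real.sqrt (r^2 - x^2)
          = ∫ x in (r*(1/2))..(r*1), Real.sqrt (r^2 - x^2) := by
            rw [show r * (1/2) = r/2 by ring, mul_one]
        _ = r^2 * (π/6 - Real.sqrt 3/8) := by
            have := congrArg (fun t : ℝ => r * t) hc
            simp only [smul_eq_mul, ← mul_assoc, mul_inv_cancel₀ (ne_of_gt hr), one_mul] at this
            rw [← this]; ring
    rw [hsplit, hleft, hright, hsubst, intervalIntegral.integral_const_mul, hscale]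
    ring
  calc ENNReal.ofReal (2 * (π/3 - Real.sqrt 3/4) * r^2)
      = volume.prod volume (regionBetween (fun x => -h x) h (Set.Ioc 0 r)) := by
        rw [hvol, key]
    _ = volume (regionBetween (fun x => -h x) h (Set.Ioc 0 r)) := by
        rw [← MeasureTheory.Measure.volume_eq_prod]
    _ ≤ _ := measure_mono hsub


lemma lens_std (r : ℝ) (hr : 0 < r) :
    ENNReal.ofReal (2 * (π/3 - Real.sqrt 3/4) * r^2) ≤
      volume (closedBall (0 : E2) r ∩ closedBall (r • EuclideanSpace.single (0 : Fin 2) (1:ℝ)) r) := by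
  set lens : Set (ℝ × ℝ) := {p : ℝ × ℝ | p.1^2 + p.2^2 ≤ r^2 ∧ (p.1 - r)^2 + p.2^2 ≤ r^2} with hlens
  have hmeas : MeasurableSet lens := by
    apply MeasurableSet.inter
    · exact measurableSet_le ((measurable_fst.pow_const 2).add (measurable_snd.pow_const 2))
        measurable_const
    · exact measurableSet_le (((measurable_fst.sub measurable_const).pow_const 2).add
        (measurable_snd.pow_const 2)) measurable_const
  have hseteq : closedBall (0 : E2) r ∩ closedBall (r • EuclideanSpace.single (0 : Fin 2) (1:ℝ)) r
      = (MeasurableEquiv.toLp 2 (Fin 2 → ℝ)).symm ⁻¹' (MeasurableEquiv.finTwoArrow ⁻¹' lens) := by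
    ext x
    have hx0 : ((MeasurableEquiv.toLp 2 (Fin 2 → ℝ)).symm x : Fin 2 → ℝ) = fun i => x i := rfl
    have hdist : ∀ y : E2, (dist x y ≤ r ↔ (x 0 - y 0)^2 + (x 1 - y 1)^2 ≤ r^2) := by
      intro y
      rw [EuclideanSpace.dist_eq, Fin.sum_univ_two]
      simp only [Real.dist_eq, sq_abs]
      constructor
      · intro h
        have h2 := Real.sq_sqrt (by positivity : (0:ℝ) ≤ (x 0 - y 0)^2 + (x 1 - y 1)^2)
        nlinarith [Real.sqrt_nonneg ((x 0 - y 0)^2 + (x 1 - y 1)^2)]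
      · intro h
        calc Real.sqrt ((x 0 - y 0)^2 + (x 1 - y 1)^2) ≤ Real.sqrt (r^2) :=
              Real.sqrt_le_sqrt h
          _ = r := Real.sqrt_sq hr.le
    simp only [Set.mem_inter_iff, mem_closedBall, Set.mem_preimage, hlens, Set.mem_setOf_eq,
      MeasurableEquiv.finTwoArrow_apply, hx0]
    rw [hdist, hdist]
    have h0 : ((0 : E2) 0) = 0 := rfl
    have h1 : ((0 : E2) 1) = 0 := rfl
    have hs0 : ((r • EuclideanSpace.single (0 : Fin 2) (1:ℝ)) 0) = r := by
      simp [EuclideanSpace.single_apply]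
    have hs1 : ((r • EuclideanSpace.single (0 : Fin 2) (1:ℝ)) 1) = 0 := by
      simp [EuclideanSpace.single_apply]
    rw [h0, h1, hs0, hs1]
    simp
  rw [hseteq,
    (EuclideanSpace.volume_preserving_symm_measurableEquiv_toLp (Fin 2)).measure_preimage
      ((MeasurableEquiv.finTwoArrow.measurable hmeas).nullMeasurableSet),
    (MeasureTheory.volume_preserving_finTwoArrow ℝ).measure_preimage hmeas.nullMeasurableSet]
  exact lens_prod r hr

lemma lens_lower (r : ℝ) (hr : 0 < r) (p q : E2) (hpq : dist p q ≤ r) :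
    ENNReal.ofReal (2 * (π/3 - Real.sqrt 3/4) * r^2) ≤
      volume (closedBall p r ∩ closedBall q r) := by
  classical
  -- choose a unit vector u with q = p + (dist p q) • u
  obtain ⟨u, hu, hq⟩ : ∃ u : E2, ‖u‖ = 1 ∧ q = p + (dist p q) • u := by
    by_cases h : q = p
    · exact ⟨EuclideanSpace.single (0 : Fin 2) (1:ℝ), by simp [EuclideanSpace.norm_single],
        by simp [h, dist_self]⟩
    · refine ⟨‖q - p‖⁻¹ • (q - p), ?_, ?_⟩
      · rw [norm_smul, norm_inv, norm_norm, inv_mul_cancel₀ (by simpa [sub_eq_zero] using h)]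
      · rw [dist_comm, dist_eq_norm, smul_smul,
          mul_inv_cancel₀ (by simpa [sub_eq_zero] using h), one_smul]
        abel
    -- the lens with second center at distance exactly r is inside
  set w : E2 := p + r • u with hw
  have hsubset : closedBall p r ∩ closedBall w r ⊆ closedBall p r ∩ closedBall q r := by
    rintro x ⟨hx1, hx2⟩
    refine ⟨hx1, ?_⟩
    rw [mem_closedBall, dist_eq_norm] at hx1 hx2 ⊢
    set t : ℝ := dist p q / r with ht
    have ht0 : 0 ≤ t := div_nonneg dist_nonneg hr.le
    have ht1 : t ≤ 1 := (div_le_one hr).mpr hpq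
    have htr : dist p q = t * r := by rw [ht, div_mul_cancel₀ _ hr.ne']
    have hxq : x - q = (1 - t) • (x - p) + t • (x - w) := by
      rw [hq, htr, hw]
      module
    rw [hxq]
    calc ‖(1 - t) • (x - p) + t • (x - w)‖ ≤ ‖(1 - t) • (x - p)‖ + ‖t • (x - w)‖ :=
          norm_add_le _ _
      _ = (1 - t) * ‖x - p‖ + t * ‖x - w‖ := by
          rw [norm_smul, norm_smul, Real.norm_of_nonneg (by linarith), Real.norm_of_nonneg ht0]
      _ ≤ (1 - t) * r + t * r := by
          gcongr <;> linarith
      _ = r := by ring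
  refine le_trans ?_ (measure_mono hsubset)
  -- translate to 0
  have htrans : closedBall p r ∩ closedBall w r
      = (fun x : E2 => x + -p) ⁻¹' (closedBall (0:E2) r ∩ closedBall (r • u) r) := by
    ext x
    simp only [Set.mem_preimage, Set.mem_inter_iff, mem_closedBall, dist_eq_norm, sub_zero, hw]
    have e1 : x + -p = x - p := by module
    have e2 : x - p - r • u = x - (p + r • u) := by module
    rw [e1, e2]
  rw [htrans, measure_preimage_add_right volume (-p) _]
  -- rotate so that u becomes the first basis vector
  have hcard : Module.finrank ℝ E2 = Fintype.card (Fin 2) := by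
    simp [finrank_euclideanSpace]
  have hon : Orthonormal ℝ (({0} : Set (Fin 2)).restrict (fun _ : Fin 2 => u)) := by
    constructor
    · intro i; exact hu
    · intro i j hij
      exact absurd (Subsingleton.elim i j) hij
  obtain ⟨B, hB⟩ := hon.exists_orthonormalBasis_extension_of_card_eq hcard
  have hBu : B 0 = u := hB 0 rfl
  have hrot : closedBall (0:E2) r ∩ closedBall (r • u) r
      = B.repr ⁻¹' (closedBall (0:E2) r ∩
          closedBall (r • EuclideanSpace.single (0 : Fin 2) (1:ℝ)) r) := by
    rw [Set.preimage_inter, LinearIsometryEquiv.preimage_closedBall,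
      LinearIsometryEquiv.preimage_closedBall, map_zero, LinearIsometryEquiv.map_smul,
      OrthonormalBasis.repr_symm_single, hBu]
  rw [hrot, B.measurePreserving_repr.measure_preimage
    ((measurableSet_closedBall.inter measurableSet_closedBall).nullMeasurableSet)]
  exact lens_std r hr

lemma ball_vol (r : ℝ) (hr : 0 ≤ r) (x : E2) :
    volume (closedBall x r) = ENNReal.ofReal (π * r^2) := by
  rw [EuclideanSpace.volume_closedBall]
  have hcard : Fintype.card (Fin 2) = 2 := by simp
  rw [hcard]
  rw [show ((2:ℕ):ℝ)/2 + 1 = (2:ℝ) by norm_num]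
  rw [show Real.sqrt π ^ 2 / Real.Gamma 2 = π by
    rw [Real.Gamma_two, Real.sq_sqrt Real.pi_pos.le, div_one]]
  rw [← ENNReal.ofReal_pow hr, ← ENNReal.ofReal_mul (by positivity)]
  ring_nf

lemma key_induction (r : ℝ) (hr : 0 < r) (c : ℕ → E2) (L : ℕ)
    (hc : ∀ i ∈ Finset.Icc 1 L, dist (c (i + 1)) (c i) ≤ r) :
    ∀ m, m ≤ L →
      volume (⋃ i ∈ Finset.Icc 1 (m + 1), closedBall (c i) r) +
        (m : ℝ≥0∞) * ENNReal.ofReal (2 * (π/3 - Real.sqrt 3/4) * r^2) ≤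
      ((m : ℝ≥0∞) + 1) * ENNReal.ofReal (π * r^2) := by
  intro m
  induction m with
  | zero =>
      intro _
      have h1 : (⋃ i ∈ Finset.Icc 1 (0 + 1), closedBall (c i) r) = closedBall (c 1) r := by
        simp
      rw [h1, ball_vol r hr.le]
      simp
  | succ m ih =>
      intro hmL
      have ihm := ih (by omega)
      have hic : Finset.Icc 1 (m + 1 + 1) = insert (m + 1 + 1) (Finset.Icc 1 (m + 1)) := by
        ext i
        simp only [Finset.mem_Icc, Finset.mem_insert]
        omega
      set U : Set E2 := ⋃ i ∈ Finset.Icc 1 (m + 1), closedBall (c i) r with hU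
      set B : Set E2 := closedBall (c (m + 1 + 1)) r with hB
      have hunion : (⋃ i ∈ Finset.Icc 1 (m + 1 + 1), closedBall (c i) r) = B ∪ U := by
        rw [hic]
        simp only [Finset.set_biUnion_insert]
        rfl
      have hie : volume (B ∪ U) + volume (B ∩ U) = volume B + volume U :=
        measure_union_add_inter' measurableSet_closedBall U
      have hlens : ENNReal.ofReal (2 * (π/3 - Real.sqrt 3/4) * r^2) ≤ volume (B ∩ U) := by
        refine le_trans (lens_lower r hr (c (m + 1 + 1)) (c (m + 1)) ?_) (measure_mono ?_)
        · exact hc (m + 1) (Finset.mem_Icc.mpr ⟨by omega, by omega⟩)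
        · refine Set.inter_subset_inter_right _ ?_
          exact Set.subset_biUnion_of_mem (u := fun i => closedBall (c i) r) (x := m + 1)
            (Finset.mem_Icc.mpr ⟨by omega, le_refl _⟩)
      rw [hunion]
      set lensV := ENNReal.ofReal (2 * (π/3 - Real.sqrt 3/4) * r^2) with hlensV
      set piV := ENNReal.ofReal (π * r^2) with hpiV
      set x : ℝ≥0∞ := volume (B ∪ U) with hx
      set y : ℝ≥0∞ := volume (B ∩ U) with hy
      set z : ℝ≥0∞ := volume U with hz
      have hcast1 : ((m + 1 : ℕ) : ℝ≥0∞) = (m : ℝ≥0∞) + 1 := by push_cast; ring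
      rw [hcast1]
      have hvolB : volume B = piV := by rw [hB, ball_vol r hr.le]
      calc x + ((m : ℝ≥0∞) + 1) * lensV
          = (x + lensV) + (m : ℝ≥0∞) * lensV := by ring
        _ ≤ (x + y) + (m : ℝ≥0∞) * lensV := by gcongr
        _ = volume B + (z + (m : ℝ≥0∞) * lensV) := by rw [hie]; ring
        _ ≤ volume B + ((m : ℝ≥0∞) + 1) * piV := by gcongr
        _ = piV + ((m : ℝ≥0∞) + 1) * piV := by rw [hvolB]
        _ = ((m : ℝ≥0∞) + 1 + 1) * piV := by ring

/-- Worst-case bound: if `c₁, …, c_l` are points of the Euclidean plane with consecutive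
points at distance at most `r`, then the area of the union of the closed balls `B(cᵢ, r)`
is at most `l·π·r² − 2(l−1)·r²·(π/3 − √3/4)`. -/
theorem volume_union_closedBalls_le_worst_case
    (r : ℝ) (hr : 0 < r) (l : ℕ) (hl : 1 ≤ l)
    (c : ℕ → EuclideanSpace ℝ (Fin 2))
    (hc : ∀ i ∈ Finset.Icc 1 (l - 1), dist (c (i + 1)) (c i) ≤ r) :
    (volume (⋃ i ∈ Finset.Icc 1 l, closedBall (c i) r)).toReal ≤
      (l : ℝ) * π * r ^ 2 - 2 * ((l : ℝ) - 1) * r ^ 2 * (π / 3 - Real.sqrt 3 / 4) := by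
  have hA : 0 ≤ 2 * (π/3 - Real.sqrt 3/4) * r^2 := by
    have h3 : Real.sqrt 3 < 2 := by
      nlinarith [Real.sq_sqrt (by norm_num : (0:ℝ) ≤ 3), Real.sqrt_nonneg 3]
    nlinarith [Real.pi_gt_three]
  have hkey := key_induction r hr c (l - 1) hc (l - 1) le_rfl
  rw [show l - 1 + 1 = l by omega] at hkey
  set V := volume (⋃ i ∈ Finset.Icc 1 l, closedBall (c i) r) with hV
  set lensV := ENNReal.ofReal (2 * (π/3 - Real.sqrt 3/4) * r^2) with hlV
  set piV := ENNReal.ofReal (π * r^2) with hpV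
  have hfin : ((l - 1 : ℕ) : ℝ≥0∞) * lensV ≠ ⊤ := by
    exact ENNReal.mul_ne_top (ENNReal.natCast_ne_top _) ENNReal.ofReal_ne_top
  have hrhs : (((l - 1 : ℕ) : ℝ≥0∞) + 1) * piV ≠ ⊤ := by
    exact ENNReal.mul_ne_top (by simp [ENNReal.natCast_ne_top]) ENNReal.ofReal_ne_top
  have hVfin : V ≠ ⊤ := by
    refine ne_top_of_le_ne_top hrhs ?_
    exact le_trans (le_add_right le_rfl) hkey
  have htr := ENNReal.toReal_mono hrhs hkey
  rw [ENNReal.toReal_add hVfin hfin, ENNReal.toReal_mul, ENNReal.toReal_mul] at htr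
  rw [ENNReal.toReal_add (ENNReal.natCast_ne_top _) ENNReal.one_ne_top] at htr
  simp only [hlV, hpV, ENNReal.toReal_natCast, ENNReal.toReal_ofReal hA,
    ENNReal.toReal_ofReal (by positivity : (0:ℝ) ≤ π * r^2), ENNReal.toReal_one] at htr
  have hcast : ((l - 1 : ℕ) : ℝ) = (l : ℝ) - 1 := by
    rw [Nat.cast_sub hl]; norm_num
  rw [hcast] at htr
  nlinarith [htr]
end

section
/- Let r > 0, l ≥ 1, let c_1, ..., c_l ∈ ℝ² satisfy ‖c_{i+1} − c_i‖ ≤ r for all i = 1, ..., l−1, let Ω ⊆ ℝ² be a measurable set of finite positive area S containing all the balls B(c_i, r), and let E be a random point distributed uniformly on Ω. Then the probability that E lies within distance r of at least one of the points c_1, ..., c_l is at most (l·π·r² − 2(l−1)·r²·(π/3 − √3/4)) / S, which in turn is at most r²·(1.92·l + 1.23)/S. -/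
open MeasureTheory Metric Real

section Aux

private theorem aux_integral (r : ℝ) (hr : 0 < r) :
    ∫ x in (r/2)..r, Real.sqrt (r^2 - x^2) = r^2 * (π/6 - Real.sqrt 3/8) := by
  have key : ∀ x ∈ Set.Ioo (r/2) r,
      HasDerivAt (fun x => (x * Real.sqrt (r^2 - x^2) + r^2 * Real.arcsin (x/r))/2)
        (Real.sqrt (r^2 - x^2)) x := by
    intro x hx
    obtain ⟨hx1, hx2⟩ := hx
    have hx0 : 0 < x := lt_trans (by positivity) hx1
    have hpos : 0 < r^2 - x^2 := by nlinarith
    set s := Real.sqrt (r^2 - x^2) with hs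
    have hsp : 0 < s := Real.sqrt_pos.mpr hpos
    have hs2 : s^2 = r^2 - x^2 := Real.sq_sqrt hpos.le
    have h1 : HasDerivAt (fun x : ℝ => r^2 - x^2) (-(2*x)) x := by
      simpa using ((hasDerivAt_pow 2 x).const_sub (r^2))
    have h2 : HasDerivAt (fun x => Real.sqrt (r^2 - x^2)) (1/(2*s) * (-(2*x))) x :=
      (Real.hasDerivAt_sqrt hpos.ne').comp x h1
    have h3 : HasDerivAt (fun x => x * Real.sqrt (r^2 - x^2))
        (1 * s + x * (1/(2*s) * (-(2*x)))) x := (hasDerivAt_id x).mul h2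
    have hxr : x / r < 1 := (div_lt_one hr).mpr hx2
    have hxr2 : (-1:ℝ) < x / r := by
      have : (0:ℝ) < x / r := by positivity
      linarith
    have h4 : HasDerivAt Real.arcsin (1 / Real.sqrt (1 - (x/r)^2)) (x/r) :=
      Real.hasDerivAt_arcsin (by linarith) (ne_of_lt hxr)
    have h5 : HasDerivAt (fun x : ℝ => x / r) (1/r) x := by
      simpa using (hasDerivAt_id x).div_const r
    have h6 : HasDerivAt (fun x => Real.arcsin (x/r))
        (1 / Real.sqrt (1 - (x/r)^2) * (1/r)) x := (h4.comp x h5 :)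
    have hsub : Real.sqrt (1 - (x/r)^2) = s / r := by
      have h7 : 1 - (x/r)^2 = (s/r)^2 := by
        field_simp
        nlinarith [hs2]
      rw [h7, Real.sqrt_sq (by positivity)]
    rw [hsub] at h6
    have := ((h3.add (h6.const_mul (r^2))).div_const 2)
    refine this.congr_deriv ?_
    have hr2 : (0:ℝ) < 2*s := by linarith
    have hs0 : s ≠ 0 := hsp.ne'
    field_simp
    linear_combination (-1 : ℝ) * hs2
  have hle : r/2 ≤ r := by linarith
  have hcont : ContinuousOn (fun x => (x * Real.sqrt (r^2 - x^2) + r^2 * Real.arcsin (x/r))/2)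
      (Set.Icc (r/2) r) := by
    apply Continuous.continuousOn
    continuity
  have hint : IntervalIntegrable (fun x => Real.sqrt (r^2 - x^2)) MeasureTheory.volume (r/2) r :=
    (Continuous.intervalIntegrable (by continuity) _ _)
  rw [intervalIntegral.integral_eq_sub_of_hasDerivAt_of_le hle hcont key hint]
  have e1 : Real.sqrt (r^2 - r^2) = 0 := by simp
  have e2 : Real.arcsin (r/r) = π/2 := by rw [div_self hr.ne']; exact Real.arcsin_one
  have e3 : Real.arcsin (r/2/r) = π/6 := by
    rw [show r/2/r = 1/2 by field_simp]
    rw [show (1:ℝ)/2 = Real.sin (π/6) by rw [Real.sin_pi_div_six]]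
    exact Real.arcsin_sin (by linarith [Real.pi_pos]) (by linarith [Real.pi_pos])
  have e4 : Real.sqrt (r^2 - (r/2)^2) = Real.sqrt 3 * r / 2 := by
    rw [show r^2 - (r/2)^2 = (Real.sqrt 3 * r / 2)^2 by
      have := Real.sq_sqrt (show (0:ℝ) ≤ 3 by norm_num); nlinarith]
    exact Real.sqrt_sq (by positivity)
  rw [e1, e2, e3, e4]
  ring

private theorem aux_region_vol (r : ℝ) (hr : 0 < r) (g : ℝ → ℝ) (hgc : Continuous g)
    (hgnn : ∀ x, 0 ≤ g x)
    (hge : ∀ x ∈ Set.uIcc (r/2) r, g x = Real.sqrt (r^2 - x^2))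
    (hge2 : ∀ x ∈ Set.uIcc 0 (r/2), g x = Real.sqrt (r^2 - (r-x)^2)) :
    volume.prod volume (regionBetween (-g) g (Set.Ioo 0 r)) =
      ENNReal.ofReal (r^2*(2*π/3 - Real.sqrt 3/2)) := by
  have hint : IntegrableOn g (Set.Ioo 0 r) :=
    (hgc.continuousOn.integrableOn_Icc).mono_set Set.Ioo_subset_Icc_self
  rw [volume_regionBetween_eq_integral (hint.neg) hint
    measurableSet_Ioo (fun x _ => by simpa using le_trans (neg_nonpos.mpr (hgnn x)) (hgnn x))]
  congr 1
  have h1 : ∫ y in Set.Ioo 0 r, (g - -g) y = ∫ y in (0:ℝ)..r, 2 * g y := by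
    rw [intervalIntegral.integral_of_le hr.le, ← MeasureTheory.integral_Ioc_eq_integral_Ioo]
    apply integral_congr_ae
    filter_upwards with y
    simp; ring
  rw [h1]
  have hig : ∀ a b : ℝ, IntervalIntegrable (fun y => 2 * g y) volume a b :=
    fun a b => ((continuous_const.mul hgc).intervalIntegrable a b)
  have hsplit : ∫ y in (0:ℝ)..r, 2 * g y =
      (∫ y in (0:ℝ)..(r/2), 2 * g y) + ∫ y in (r/2)..r, 2 * g y :=
    (intervalIntegral.integral_add_adjacent_intervals (hig 0 (r/2)) (hig (r/2) r)).symm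
  have hright : ∫ y in (r/2)..r, 2 * g y = ∫ y in (r/2)..r, 2 * Real.sqrt (r^2 - y^2) := by
    apply intervalIntegral.integral_congr
    intro x hx
    show 2 * g x = _
    rw [hge x hx]
  have hleft : ∫ y in (0:ℝ)..(r/2), 2 * g y
      = ∫ y in (0:ℝ)..(r/2), (fun t => 2 * Real.sqrt (r^2 - t^2)) (r - y) := by
    apply intervalIntegral.integral_congr
    intro x hx
    show 2 * g x = _
    rw [hge2 x hx]
  rw [hsplit, hright, hleft, intervalIntegral.integral_comp_sub_left
    (fun t => 2 * Real.sqrt (r^2 - t^2)) r]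
  rw [show r - r/2 = r/2 by ring, show r - 0 = r by ring]
  rw [intervalIntegral.integral_const_mul, aux_integral r hr]
  ring

private theorem aux_lens_prod (r : ℝ) (hr : 0 < r) :
    ENNReal.ofReal (r^2*(2*π/3 - Real.sqrt 3/2)) ≤
      volume {p : ℝ × ℝ | p.1^2+p.2^2 ≤ r^2 ∧ (p.1-r)^2+p.2^2 ≤ r^2} := by
  have hgc : Continuous (fun x : ℝ => Real.sqrt (r^2 - (max x (r-x))^2)) := by
    apply Real.continuous_sqrt.comp
    continuity
  set g : ℝ → ℝ := fun x => Real.sqrt (r^2 - (max x (r-x))^2) with hg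
  have hgnn : ∀ x, 0 ≤ g x := fun x => Real.sqrt_nonneg _
  have hsub : regionBetween (-g) g (Set.Ioo 0 r) ⊆
      {p : ℝ × ℝ | p.1^2+p.2^2 ≤ r^2 ∧ (p.1-r)^2+p.2^2 ≤ r^2} := by
    rintro ⟨x, y⟩ ⟨⟨hx0, hxr⟩, hy1, hy2⟩
    simp only [Set.mem_setOf_eq]
    simp only [Pi.neg_apply] at hy1 hy2 hx0 hxr
    have h0 : 0 ≤ g x := hgnn x
    have hyabs : y^2 ≤ g x ^ 2 := by nlinarith [hy1, hy2]
    have hmnn : 0 ≤ r^2 - (max x (r-x))^2 := by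
      have hm1 : max x (r-x) ≤ r := max_le hxr.le (by linarith)
      have hm2 : 0 ≤ max x (r-x) := le_trans hx0.le (le_max_left _ _)
      nlinarith
    have hgx : g x ^ 2 = r^2 - (max x (r-x))^2 := Real.sq_sqrt hmnn
    have h1 : x^2 ≤ (max x (r-x))^2 := by
      have : x ≤ max x (r-x) := le_max_left _ _
      nlinarith [hx0]
    have h2 : (r-x)^2 ≤ (max x (r-x))^2 := by
      have h3 : r - x ≤ max x (r-x) := le_max_right _ _
      nlinarith [hxr]
    constructor
    · nlinarith
    · nlinarith [sq_nonneg (x - r + (r-x))]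
  have hge : ∀ x ∈ Set.uIcc (r/2) r, g x = Real.sqrt (r^2 - x^2) := by
    intro x hx
    rw [Set.uIcc_of_le (by linarith)] at hx
    obtain ⟨h1, h2⟩ := hx
    show Real.sqrt (r^2 - (max x (r-x))^2) = _
    rw [max_eq_left (by linarith)]
  have hge2 : ∀ x ∈ Set.uIcc 0 (r/2), g x = Real.sqrt (r^2 - (r-x)^2) := by
    intro x hx
    rw [Set.uIcc_of_le (by linarith)] at hx
    obtain ⟨h1, h2⟩ := hx
    show Real.sqrt (r^2 - (max x (r-x))^2) = _
    rw [max_eq_right (by linarith)]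
  calc ENNReal.ofReal (r^2*(2*π/3 - Real.sqrt 3/2))
      = volume.prod volume (regionBetween (-g) g (Set.Ioo 0 r)) :=
        (aux_region_vol r hr g hgc hgnn hge hge2).symm
    _ = volume (regionBetween (-g) g (Set.Ioo 0 r)) := by
        rw [← MeasureTheory.Measure.volume_eq_prod]
    _ ≤ _ := measure_mono hsub

private theorem aux_canonical (r : ℝ) (hr : 0 < r) :
    ENNReal.ofReal (r^2*(2*π/3 - Real.sqrt 3/2)) ≤
      volume (closedBall (0 : EuclideanSpace ℝ (Fin 2)) r ∩
        closedBall (EuclideanSpace.single (0 : Fin 2) r) r) := by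
  have hball : ∀ (q p : EuclideanSpace ℝ (Fin 2)),
      (dist p q ≤ r ↔ (p 0 - q 0)^2 + (p 1 - q 1)^2 ≤ r^2) := by
    intro q p
    rw [EuclideanSpace.dist_eq, Fin.sum_univ_two, Real.sqrt_le_iff]
    simp only [Real.dist_eq, sq_abs]
    exact ⟨fun h => h.2, fun h => ⟨hr.le, h⟩⟩
  set A : Set (ℝ × ℝ) := {p : ℝ × ℝ | p.1^2+p.2^2 ≤ r^2 ∧ (p.1-r)^2+p.2^2 ≤ r^2} with hA
  have hAm : MeasurableSet A := by
    have m1 : Measurable fun p : ℝ × ℝ => p.1^2 + p.2^2 :=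
      ((measurable_fst.pow_const 2).add (measurable_snd.pow_const 2))
    have m2 : Measurable fun p : ℝ × ℝ => (p.1 - r)^2 + p.2^2 :=
      (((measurable_fst.sub_const r).pow_const 2).add (measurable_snd.pow_const 2))
    exact (measurableSet_le m1 measurable_const).inter (measurableSet_le m2 measurable_const)
  have heq : volume (closedBall (0 : EuclideanSpace ℝ (Fin 2)) r ∩
      closedBall (EuclideanSpace.single (0 : Fin 2) r) r) = volume A := by
    have φ2 := MeasureTheory.volume_preserving_finTwoArrow ℝ
    have φ1 := EuclideanSpace.volume_preserving_symm_measurableEquiv_toLp (Fin 2)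
    have step2 : volume ((MeasurableEquiv.finTwoArrow (α := ℝ)) ⁻¹' A) = volume A :=
      φ2.measure_preimage hAm.nullMeasurableSet
    have step1 : volume ((MeasurableEquiv.toLp 2 (Fin 2 → ℝ)).symm ⁻¹'
        ((MeasurableEquiv.finTwoArrow (α := ℝ)) ⁻¹' A)) =
        volume ((MeasurableEquiv.finTwoArrow (α := ℝ)) ⁻¹' A) :=
      φ1.measure_preimage ((MeasurableEquiv.finTwoArrow (α := ℝ)).measurable hAm).nullMeasurableSet
    rw [← step2, ← step1]
    congr 1
    ext p
    simp only [Set.mem_preimage, MeasurableEquiv.finTwoArrow_apply, hA, Set.mem_setOf_eq,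
      Set.mem_inter_iff, mem_closedBall, hball]
    simp [EuclideanSpace.single_apply]
  rw [heq]
  exact aux_lens_prod r hr

private theorem aux_translate (r : ℝ) (a b : EuclideanSpace ℝ (Fin 2)) :
    volume (closedBall a r ∩ closedBall b r) =
    volume (closedBall (0 : EuclideanSpace ℝ (Fin 2)) r ∩ closedBall (b - a) r) := by
  have h := measurePreserving_add_right (volume : Measure (EuclideanSpace ℝ (Fin 2))) a
  have hpre : (fun x => x + a) ⁻¹' (closedBall a r ∩ closedBall b r) =
      closedBall (0 : EuclideanSpace ℝ (Fin 2)) r ∩ closedBall (b - a) r := by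
    ext x
    simp only [Set.mem_preimage, Set.mem_inter_iff, mem_closedBall, dist_eq_norm]
    constructor
    · rintro ⟨h1, h2⟩
      exact ⟨by simpa using h1, by rw [show x - (b - a) = x + a - b by abel]; exact h2⟩
    · rintro ⟨h1, h2⟩
      exact ⟨by simpa using h1, by rw [show x + a - b = x - (b - a) by abel]; exact h2⟩
  rw [← hpre]
  exact (h.measure_preimage ((measurableSet_closedBall.inter
    measurableSet_closedBall)).nullMeasurableSet).symm

private theorem aux_reflect (r : ℝ) (hr : 0 < r) (w : EuclideanSpace ℝ (Fin 2)) (hw : ‖w‖ = r) :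
    volume (closedBall (0 : EuclideanSpace ℝ (Fin 2)) r ∩ closedBall w r) =
    volume (closedBall (0 : EuclideanSpace ℝ (Fin 2)) r ∩
      closedBall (EuclideanSpace.single (0 : Fin 2) r) r) := by
  set w₀ : EuclideanSpace ℝ (Fin 2) := EuclideanSpace.single (0 : Fin 2) r with hw₀
  have hw₀n : ‖w₀‖ = r := by
    rw [hw₀, EuclideanSpace.norm_single, Real.norm_eq_abs, abs_of_pos hr]
  set f := Submodule.reflection (ℝ ∙ (w - w₀))ᗮ with hf
  have hfw : f w = w₀ := Submodule.reflection_sub (by rw [hw, hw₀n])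
  have hmp := f.measurePreserving
  have hpre : ⇑f ⁻¹' (closedBall 0 r ∩ closedBall w₀ r) = closedBall 0 r ∩ closedBall w r := by
    ext x
    simp only [Set.mem_preimage, Set.mem_inter_iff, mem_closedBall, dist_eq_norm]
    have e1 : ‖f x - 0‖ = ‖x - 0‖ := by rw [sub_zero, sub_zero, f.norm_map]
    have e2 : ‖f x - w₀‖ = ‖x - w‖ := by
      rw [show f x - w₀ = f (x - w) by rw [map_sub, hfw], f.norm_map]
    rw [e1, e2]
  calc volume (closedBall (0 : EuclideanSpace ℝ (Fin 2)) r ∩ closedBall w r)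
      = volume (⇑f ⁻¹' (closedBall 0 r ∩ closedBall w₀ r)) := by rw [hpre]
    _ = volume (closedBall 0 r ∩ closedBall w₀ r) :=
        hmp.measure_preimage ((measurableSet_closedBall.inter
          measurableSet_closedBall)).nullMeasurableSet

private theorem aux_lens_lower (r : ℝ) (hr : 0 < r) (a b : EuclideanSpace ℝ (Fin 2))
    (hd : dist a b ≤ r) :
    ENNReal.ofReal (r^2*(2*π/3 - Real.sqrt 3/2)) ≤
      volume (closedBall a r ∩ closedBall b r) := by
  have hsingle : ‖EuclideanSpace.single (0 : Fin 2) r‖ = r := by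
    rw [EuclideanSpace.norm_single, Real.norm_eq_abs, abs_of_pos hr]
  rcases eq_or_ne a b with rfl | hab
  · -- a = b : intersection is the whole ball, which contains a canonical lens
    set b'' := a + EuclideanSpace.single (0 : Fin 2) r with hb''
    have h2 : volume (closedBall a r ∩ closedBall b'' r) =
        volume (closedBall (0 : EuclideanSpace ℝ (Fin 2)) r ∩
          closedBall (EuclideanSpace.single (0 : Fin 2) r) r) := by
      rw [aux_translate, hb'', add_sub_cancel_left]
    rw [Set.inter_self]
    calc ENNReal.ofReal (r^2*(2*π/3 - Real.sqrt 3/2))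
        ≤ volume (closedBall (0 : EuclideanSpace ℝ (Fin 2)) r ∩
            closedBall (EuclideanSpace.single (0 : Fin 2) r) r) := aux_canonical r hr
      _ = volume (closedBall a r ∩ closedBall b'' r) := h2.symm
      _ ≤ volume (closedBall a r) := measure_mono Set.inter_subset_left
  · set d := dist a b with hdd
    have hd0 : 0 < d := dist_pos.mpr hab
    set b' := a + (r / d) • (b - a) with hb'
    have hsubset : closedBall a r ∩ closedBall b' r ⊆ closedBall a r ∩ closedBall b r := by
      rintro x ⟨h1, h2⟩
      refine ⟨h1, ?_⟩
      have hxa : a ∈ closedBall x r := by rw [mem_closedBall, dist_comm]; exact h1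
      have hxb' : b' ∈ closedBall x r := by
        rw [mem_closedBall, dist_comm]; exact h2
      have hseg : b = (1 - d/r) • a + (d/r) • b' := by
        rw [hb', smul_add, smul_smul]
        rw [show (d/r) * (r/d) = 1 by field_simp]
        module
      have hb : b ∈ closedBall x r := by
        rw [hseg]
        have hdr : d/r ≤ 1 := (div_le_one hr).mpr hd
        exact (convex_closedBall x r) hxa hxb' (by linarith) (by positivity) (by ring)
      rwa [mem_closedBall, dist_comm] at hb
    have hnorm : ‖b' - a‖ = r := by
      rw [hb', add_sub_cancel_left, norm_smul, Real.norm_eq_abs,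
        abs_of_pos (by positivity : (0:ℝ) < r / d), ← dist_eq_norm, dist_comm, ← hdd]
      field_simp
    calc ENNReal.ofReal (r^2*(2*π/3 - Real.sqrt 3/2))
        ≤ volume (closedBall (0 : EuclideanSpace ℝ (Fin 2)) r ∩
            closedBall (EuclideanSpace.single (0 : Fin 2) r) r) := aux_canonical r hr
      _ = volume (closedBall (0 : EuclideanSpace ℝ (Fin 2)) r ∩ closedBall (b' - a) r) :=
          (aux_reflect r hr (b' - a) hnorm).symm
      _ = volume (closedBall a r ∩ closedBall b' r) := (aux_translate r a b').symm
      _ ≤ volume (closedBall a r ∩ closedBall b r) := measure_mono hsubset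

private theorem aux_ball_vol (r : ℝ) (hr : 0 ≤ r) (x : EuclideanSpace ℝ (Fin 2)) :
    volume (closedBall x r) = ENNReal.ofReal (π * r^2) := by
  rw [EuclideanSpace.volume_closedBall]
  simp only [Fintype.card_fin]
  rw [show ((2:ℕ):ℝ)/2 + 1 = 2 by norm_num]
  rw [Real.Gamma_two]
  rw [show Real.sqrt π ^ 2 = π from Real.sq_sqrt Real.pi_nonneg]
  rw [← ENNReal.ofReal_pow hr, ← ENNReal.ofReal_mul (by positivity)]
  congr 1
  ring

end Aux

/-- Let `c 1, …, c l` be node positions in the plane with consecutive nodes within distance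
`r` of each other, all of whose `r`-balls lie in a measurable region `Ω` of finite positive
area `S`, and let `E` be a point distributed uniformly on `Ω` (law
`μ = (volume Ω)⁻¹ • volume.restrict Ω`).  Then the probability that `E` lies within distance
`r` of some node is at most `(l·π·r² − 2(l−1)·r²·(π/3 − √3/4))/S`, which is at most
`r²·(1.92·l + 1.23)/S`. -/
theorem prob_eavesdropper_overhears_route_le
    (r : ℝ) (hr : 0 < r) (l : ℕ) (hl : 1 ≤ l)
    (c : ℕ → EuclideanSpace ℝ (Fin 2))
    (hc : ∀ i ∈ Finset.Icc 1 (l - 1), dist (c (i + 1)) (c i) ≤ r)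
    (Ω : Set (EuclideanSpace ℝ (Fin 2))) (hΩm : MeasurableSet Ω)
    (S : ℝ) (hS : (volume Ω).toReal = S) (hSpos : 0 < S) (hSfin : volume Ω ≠ ⊤)
    (hsub : ∀ i ∈ Finset.Icc 1 l, closedBall (c i) r ⊆ Ω)
    (μ : Measure (EuclideanSpace ℝ (Fin 2)))
    (hμ : μ = (volume Ω)⁻¹ • volume.restrict Ω) :
    (μ {p | ∃ i ∈ Finset.Icc 1 l, dist p (c i) ≤ r}).toReal ≤
        ((l : ℝ) * π * r ^ 2 - 2 * ((l : ℝ) - 1) * r ^ 2 * (π / 3 - Real.sqrt 3 / 4)) / S ∧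
      ((l : ℝ) * π * r ^ 2 - 2 * ((l : ℝ) - 1) * r ^ 2 * (π / 3 - Real.sqrt 3 / 4)) / S ≤
        r ^ 2 * (1.92 * (l : ℝ) + 1.23) / S := by
  have hπ : π < 3.141593 := by
    have := Real.pi_lt_d6; linarith
  have hπ3 : 3 < π := Real.pi_gt_three
  have hs3l : (1.732 : ℝ) ≤ Real.sqrt 3 := by
    nlinarith [Real.sq_sqrt (show (0:ℝ) ≤ 3 by norm_num), Real.sqrt_nonneg 3]
  have hs3u : Real.sqrt 3 ≤ 1.7321 := by
    nlinarith [Real.sq_sqrt (show (0:ℝ) ≤ 3 by norm_num), Real.sqrt_nonneg 3]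
  have hLnn : (0:ℝ) ≤ r^2*(2*π/3 - Real.sqrt 3/2) := by nlinarith [sq_nonneg r]
  set B : ℕ → Set (EuclideanSpace ℝ (Fin 2)) := fun i => closedBall (c i) r with hB
  set V : ENNReal := ENNReal.ofReal (π * r^2) with hV
  set L : ENNReal := ENNReal.ofReal (r^2*(2*π/3 - Real.sqrt 3/2)) with hL
  have hBm : ∀ i, MeasurableSet (B i) := fun i => measurableSet_closedBall
  have hBvol : ∀ i, volume (B i) = V := fun i => aux_ball_vol r hr.le (c i)
  have hlens : ∀ n : ℕ, 1 ≤ n → n + 1 ≤ l → L ≤ volume (B n ∩ B (n+1)) := by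
    intro n h1 h2
    have hcn : dist (c (n+1)) (c n) ≤ r := hc n (Finset.mem_Icc.mpr ⟨h1, by omega⟩)
    rw [hL]
    exact aux_lens_lower r hr (c n) (c (n+1)) (by rwa [dist_comm])
  -- chain inequality
  have key : ∀ n : ℕ, 1 ≤ n → n ≤ l →
      volume (⋃ i ∈ Finset.Icc 1 n, B i) + (n-1) • L ≤ n • V := by
    intro n hn
    induction n, hn using Nat.le_induction with
    | base =>
      intro _
      simp only [Finset.Icc_self, Finset.mem_singleton, Set.iUnion_iUnion_eq_left,
        Nat.sub_self, zero_smul, add_zero, one_smul]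
      rw [hBvol 1]
    | succ n hn ih =>
      intro hnl
      have ih' := ih (by omega)
      have hIcc : Finset.Icc 1 (n+1) = insert (n+1) (Finset.Icc 1 n) := by
        ext x
        simp only [Finset.mem_Icc, Finset.mem_insert]
        omega
      have hU : (⋃ i ∈ Finset.Icc 1 (n+1), B i) =
          B (n+1) ∪ ⋃ i ∈ Finset.Icc 1 n, B i := by
        rw [hIcc, Finset.set_biUnion_insert]
      set U : Set (EuclideanSpace ℝ (Fin 2)) := ⋃ i ∈ Finset.Icc 1 n, B i with hUdef
      have hBnU : B n ⊆ U := by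
        apply Set.subset_biUnion_of_mem (u := B)
        exact Finset.mem_Icc.mpr ⟨hn, le_rfl⟩
      have hinter : L ≤ volume (U ∩ B (n+1)) := by
        refine le_trans (hlens n hn hnl) (measure_mono ?_)
        exact Set.inter_subset_inter_left _ hBnU
      have hmai : volume (U ∪ B (n+1)) + volume (U ∩ B (n+1)) =
          volume U + volume (B (n+1)) := measure_union_add_inter U (hBm (n+1))
      have hstep : volume (U ∪ B (n+1)) + L ≤ volume U + V := by
        rw [← hBvol (n+1), ← hmai]
        exact add_le_add_right hinter _
      have hsm : (n+1-1) • L = (n-1) • L + L := by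
        have : n + 1 - 1 = (n-1) + 1 := by omega
        rw [this, succ_nsmul]
      calc volume (⋃ i ∈ Finset.Icc 1 (n+1), B i) + (n+1-1) • L
          = volume (U ∪ B (n+1)) + ((n-1) • L + L) := by
            rw [hU, hsm, Set.union_comm]
        _ = (volume (U ∪ B (n+1)) + L) + (n-1) • L := by ring
        _ ≤ (volume U + V) + (n-1) • L := add_le_add_left hstep _
        _ = (volume U + (n-1) • L) + V := by ring
        _ ≤ n • V + V := add_le_add_left ih' _
        _ = (n+1) • V := (succ_nsmul V n).symm
  -- identify the event with the union
  set T : Set (EuclideanSpace ℝ (Fin 2)) := {p | ∃ i ∈ Finset.Icc 1 l, dist p (c i) ≤ r} with hT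
  have hTU : T = ⋃ i ∈ Finset.Icc 1 l, B i := by
    ext p
    simp [hT, hB, Set.mem_iUnion, mem_closedBall]
  have hTm : MeasurableSet T := by
    rw [hTU]
    exact MeasurableSet.biUnion (Finset.Icc 1 l).countable_toSet (fun i _ => hBm i)
  have hTsub : T ⊆ Ω := by
    rw [hTU]
    exact Set.iUnion₂_subset fun i hi => hsub i hi
  have hμT : (μ T).toReal = (volume T).toReal / S := by
    rw [hμ, Measure.smul_apply, Measure.restrict_apply hTm,
      Set.inter_eq_left.mpr hTsub, smul_eq_mul, ENNReal.toReal_mul, ENNReal.toReal_inv, hS]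
    ring
  -- convert chain inequality to reals
  have hTfin : volume T ≠ ⊤ := ne_top_of_le_ne_top hSfin (measure_mono hTsub)
  have hkey := key l hl le_rfl
  rw [← hTU] at hkey
  have hVfin : ∀ n : ℕ, (n • V) ≠ (⊤ : ENNReal) := by
    intro n
    rw [nsmul_eq_mul]
    exact ENNReal.mul_ne_top (ENNReal.natCast_ne_top n) ENNReal.ofReal_ne_top
  have hrkey := ENNReal.toReal_mono (hVfin l) hkey
  have hLsfin : ((l-1) • L) ≠ (⊤ : ENNReal) := by
    rw [nsmul_eq_mul]
    exact ENNReal.mul_ne_top (ENNReal.natCast_ne_top _) ENNReal.ofReal_ne_top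
  rw [ENNReal.toReal_add hTfin hLsfin] at hrkey
  have hcast : ((l - 1 : ℕ) : ℝ) = (l : ℝ) - 1 := by
    rw [Nat.cast_sub hl, Nat.cast_one]
  have e1 : (((l-1) • L)).toReal = ((l:ℝ) - 1) * (r^2*(2*π/3 - Real.sqrt 3/2)) := by
    rw [nsmul_eq_mul, ENNReal.toReal_mul, ENNReal.toReal_natCast, hL,
      ENNReal.toReal_ofReal hLnn, hcast]
  have e2 : ((l • V)).toReal = (l:ℝ) * (π * r^2) := by
    rw [nsmul_eq_mul, ENNReal.toReal_mul, ENNReal.toReal_natCast, hV,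
      ENNReal.toReal_ofReal (by positivity)]
  rw [e1, e2] at hrkey
  have hl1 : (1:ℝ) ≤ (l:ℝ) := by exact_mod_cast hl
  have hnum : (volume T).toReal ≤
      (l : ℝ) * π * r ^ 2 - 2 * ((l : ℝ) - 1) * r ^ 2 * (π / 3 - Real.sqrt 3 / 4) := by
    nlinarith [hrkey]
  constructor
  · rw [hμT]
    exact div_le_div_of_nonneg_right hnum hSpos.le |>.trans_eq rfl
  · apply div_le_div_of_nonneg_right _ hSpos.le
    nlinarith [sq_nonneg r, mul_nonneg (sub_nonneg.mpr hl1)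
      (show (0:ℝ) ≤ 1.92 - π/3 - Real.sqrt 3/2 by nlinarith),
      mul_le_mul_of_nonneg_left (show π/3 + Real.sqrt 3/2 - 1.92 ≤ 0 by nlinarith)
        (sub_nonneg.mpr hl1)]
end
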